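/- arXiv:1611.03294 — 3 statements merged into one kernel-verified Lean document; each statement's English description precedes it below -/
import Mathlib

section
/- Let R be a rectangle with horizontal dimension at least 2 and vertical dimension at least 1, and let A ⊂ R be any set of sites. Then R is up-traversable by A if and only if the closure ⟨A⟩ contains a spanning pair for every row of R. -/
open Real

def nbhd : Finset (ℤ × ℤ) := {(-2,0), (-1,0), (0,-1), (0,1), (1,0), (2,0)}

def bootOp (N : Finset (ℤ × ℤ)) (r : ℕ) (S : Set (ℤ × ℤ)) : Set (ℤ × ℤ) :=
  S ∪ {v | r ≤ (((fun n => v + n) '' (N : Set (ℤ × ℤ))) ∩ S).ncard}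

def bsClosure (N : Finset (ℤ × ℤ)) (r : ℕ) (S : Set (ℤ × ℤ)) : Set (ℤ × ℤ) :=
  ⋃ t : ℕ, (bootOp N r)^[t] S

noncomputable def rectF (a b c d : ℤ) : Finset (ℤ × ℤ) := Finset.Icc a b ×ˢ Finset.Icc c d

open Classical in
noncomputable def prob (F : Finset (ℤ × ℤ)) (p : ℝ) (E : Set (ℤ × ℤ) → Prop) : ℝ :=
  ∑ T ∈ F.powerset, if E (T : Set (ℤ × ℤ)) then p ^ T.card * (1 - p) ^ (F.card - T.card) else 0

def internallyFilled (N : Finset (ℤ × ℤ)) (r : ℕ) (R S : Set (ℤ × ℤ)) : Prop :=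
  R ⊆ bsClosure N r (S ∩ R)

def upTrav (a b c d : ℤ) (S : Set (ℤ × ℤ)) : Prop :=
  (rectF a b c d : Set (ℤ × ℤ)) ⊆
    bsClosure nbhd 3 (((rectF a b c d : Set (ℤ × ℤ)) ∩ S) ∪ (rectF a b (c-1) (c-1) : Set (ℤ × ℤ)))

def spanningPair (a b c : ℤ) (P : Set (ℤ × ℤ)) : Prop :=
  (rectF a b c c : Set (ℤ × ℤ)) ⊆ bsClosure nbhd 3 (P ∪ (rectF a b (c-1) (c-1) : Set (ℤ × ℤ)))

lemma mem_rect_iff {a b c d : ℤ} {p : ℤ × ℤ} :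
    p ∈ (rectF a b c d : Set (ℤ × ℤ)) ↔ a ≤ p.1 ∧ p.1 ≤ b ∧ c ≤ p.2 ∧ p.2 ≤ d := by
  constructor
  · intro h; simp [rectF, Finset.mem_Icc, Prod.le_def] at h; tauto
  · intro h; simp [rectF, Finset.mem_Icc, Prod.le_def]; tauto

lemma img_finite (N : Finset (ℤ × ℤ)) (v : ℤ × ℤ) :
    ((fun n => v + n) '' (N : Set (ℤ × ℤ))).Finite :=
  Set.Finite.image _ N.finite_toSet

lemma subset_bootOp (N : Finset (ℤ × ℤ)) (r : ℕ) (S : Set (ℤ × ℤ)) : S ⊆ bootOp N r S :=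
  Set.subset_union_left

lemma bootOp_mono (N : Finset (ℤ × ℤ)) (r : ℕ) {S T : Set (ℤ × ℤ)} (h : S ⊆ T) :
    bootOp N r S ⊆ bootOp N r T := by
  intro v hv
  rcases hv with h1 | h1
  · exact Or.inl (h h1)
  · refine Or.inr ?_
    simp only [Set.mem_setOf_eq] at h1 ⊢
    exact le_trans h1 (Set.ncard_le_ncard (Set.inter_subset_inter_right _ h)
      ((img_finite N v).inter_of_left _))

lemma subset_cl (N : Finset (ℤ × ℤ)) (r : ℕ) (S : Set (ℤ × ℤ)) : S ⊆ bsClosure N r S :=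
  fun x hx => Set.mem_iUnion.2 ⟨0, hx⟩

lemma iter_subset_cl (N : Finset (ℤ × ℤ)) (r : ℕ) (S : Set (ℤ × ℤ)) (t : ℕ) :
    (bootOp N r)^[t] S ⊆ bsClosure N r S :=
  fun x hx => Set.mem_iUnion.2 ⟨t, hx⟩

lemma cl_min (N : Finset (ℤ × ℤ)) (r : ℕ) {S U : Set (ℤ × ℤ)} (h1 : S ⊆ U)
    (h2 : bootOp N r U ⊆ U) : bsClosure N r S ⊆ U := by
  have key : ∀ t, (bootOp N r)^[t] S ⊆ U := by
    intro t
    induction t with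
    | zero => simpa using h1
    | succ n ih =>
      rw [Function.iterate_succ_apply']
      exact fun x hx => h2 (bootOp_mono N r ih hx)
  exact fun x hx => by obtain ⟨t, ht⟩ := Set.mem_iUnion.1 hx; exact key t ht

lemma iter_mono_t (N : Finset (ℤ × ℤ)) (r : ℕ) (S : Set (ℤ × ℤ)) (s t : ℕ) (h : s ≤ t) :
    (bootOp N r)^[s] S ⊆ (bootOp N r)^[t] S := by
  induction h with
  | refl => exact subset_rfl
  | step _ ih =>
    rename_i k hk
    refine ih.trans ?_
    rw [Function.iterate_succ_apply']
    exact subset_bootOp N r _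

lemma exists_bound {α : Type*} {g : ℕ → Set α} (hg : ∀ s t : ℕ, s ≤ t → g s ⊆ g t)
    {E : Set α} (hE : E.Finite) (h : ∀ e ∈ E, ∃ t, e ∈ g t) : ∃ T, E ⊆ g T := by
  revert h
  refine Set.Finite.induction_on (motive := fun E _ => (∀ e ∈ E, ∃ t, e ∈ g t) → ∃ T, E ⊆ g T) E hE ?_ ?_
  · intro _; exact ⟨0, by simp⟩
  · rintro x s - - ih h
    obtain ⟨T1, hT1⟩ := ih (fun e he => h e (Set.mem_insert_of_mem _ he))
    obtain ⟨T2, hT2⟩ := h x (Set.mem_insert _ _)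
    exact ⟨max T1 T2, by
      rintro e (rfl | he)
      · exact hg T2 _ (le_max_right _ _) hT2
      · exact hg T1 _ (le_max_left _ _) (hT1 he)⟩

lemma cl_closed (N : Finset (ℤ × ℤ)) (r : ℕ) (S : Set (ℤ × ℤ)) :
    bootOp N r (bsClosure N r S) ⊆ bsClosure N r S := by
  intro v hv
  rcases hv with h | h
  · exact h
  · simp only [Set.mem_setOf_eq] at h
    have hEfin : (((fun n => v + n) '' (N : Set (ℤ × ℤ))) ∩ bsClosure N r S).Finite :=
      (img_finite N v).inter_of_left _
    obtain ⟨T, hT⟩ := exists_bound (iter_mono_t N r S) hEfin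
      (fun e he => Set.mem_iUnion.1 he.2)
    refine iter_subset_cl N r S (T + 1) ?_
    rw [Function.iterate_succ_apply']
    refine Or.inr ?_
    simp only [Set.mem_setOf_eq]
    refine le_trans h (Set.ncard_le_ncard ?_ ((img_finite N v).inter_of_left _))
    exact fun e he => ⟨he.1, hT he⟩

lemma cl_mono (N : Finset (ℤ × ℤ)) (r : ℕ) {S T : Set (ℤ × ℤ)} (h : S ⊆ T) :
    bsClosure N r S ⊆ bsClosure N r T :=
  cl_min N r (h.trans (subset_cl N r T)) (cl_closed N r T)

lemma nbhd_cases {n : ℤ × ℤ} (hn : n ∈ nbhd) :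
    n = (-2,0) ∨ n = (-1,0) ∨ n = (0,-1) ∨ n = (0,1) ∨ n = (1,0) ∨ n = (2,0) := by
  simpa [nbhd] using hn

lemma mem_op_of {S : Set (ℤ × ℤ)} (v : ℤ × ℤ) (n1 n2 n3 : ℤ × ℤ)
    (h1 : n1 ∈ nbhd) (h2 : n2 ∈ nbhd) (h3 : n3 ∈ nbhd)
    (d12 : n1 ≠ n2) (d13 : n1 ≠ n3) (d23 : n2 ≠ n3)
    (m1 : v + n1 ∈ S) (m2 : v + n2 ∈ S) (m3 : v + n3 ∈ S) :
    v ∈ bootOp nbhd 3 S := by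
  refine Or.inr ?_
  simp only [Set.mem_setOf_eq]
  have hsub : ({v + n1, v + n2, v + n3} : Set (ℤ × ℤ)) ⊆
      ((fun n => v + n) '' (nbhd : Set (ℤ × ℤ))) ∩ S := by
    rintro e (rfl | rfl | rfl)
    · exact ⟨⟨n1, by simpa using h1, rfl⟩, m1⟩
    · exact ⟨⟨n2, by simpa using h2, rfl⟩, m2⟩
    · exact ⟨⟨n3, by simpa using h3, rfl⟩, m3⟩
  have hfin : (((fun n => v + n) '' (nbhd : Set (ℤ × ℤ))) ∩ S).Finite :=
    (Set.Finite.image _ nbhd.finite_toSet).inter_of_left _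
  have e12 : v + n1 ≠ v + n2 := fun h => d12 (by exact add_left_cancel h)
  have e13 : v + n1 ≠ v + n3 := fun h => d13 (by exact add_left_cancel h)
  have e23 : v + n2 ≠ v + n3 := fun h => d23 (by exact add_left_cancel h)
  have h3' : ({v + n1, v + n2, v + n3} : Set (ℤ × ℤ)).ncard = 3 := by
    rw [Set.ncard_insert_of_notMem (by simp [e12, e13]) (Set.toFinite _),
      Set.ncard_pair e23]
  calc (3:ℕ) = _ := h3'.symm
    _ ≤ _ := Set.ncard_le_ncard hsub hfin
section Fill

variable {C : Set (ℤ × ℤ)} (hC : bootOp nbhd 3 C ⊆ C)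

lemma prodmk_add (x y u v : ℤ) : ((x,y) : ℤ×ℤ) + (u,v) = (x+u, y+v) := rfl

include hC in
lemma fill_right {a b j x : ℤ}
    (hB : ∀ z, a ≤ z → z ≤ b → (z, j - 1) ∈ C)
    (h0 : (x, j) ∈ C) (h1 : (x + 1, j) ∈ C) (hxa : a ≤ x + 2) :
    ∀ k : ℕ, x + k ≤ b → (x + k, j) ∈ C := by
  intro k
  induction k using Nat.strong_induction_on with
  | _ k ih =>
    match k with
    | 0 => intro _; simpa using h0
    | 1 => intro _; push_cast; simpa using h1
    | (k+2) =>
      intro hle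
      have hc2 : ((k:ℤ)+2) = ((k+2 : ℕ) : ℤ) := by push_cast; ring
      have hle' : x + (k:ℤ) + 2 ≤ b := by push_cast at hle; omega
      have hm1 : (x + ((k+1:ℕ):ℤ), j) ∈ C := ih (k+1) (by omega) (by push_cast; omega)
      have hm2 : (x + ((k:ℕ):ℤ), j) ∈ C := ih k (by omega) (by push_cast; omega)
      have hb2 : (x + (k:ℤ) + 2, j - 1) ∈ C := hB _ (by omega) hle'
      have := mem_op_of (S := C) (x + (k:ℤ) + 2, j) (-1,0) (-2,0) (0,-1)
        (by simp [nbhd]) (by simp [nbhd]) (by simp [nbhd])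
        (by decide) (by decide) (by decide)
        (by rw [prodmk_add]; push_cast at hm1 ⊢; convert hm1 using 2 <;> ring_nf)
        (by rw [prodmk_add]; push_cast at hm2 ⊢; convert hm2 using 2 <;> ring_nf)
        (by rw [prodmk_add]; convert hb2 using 2 <;> ring)
      have hx : (x + ((k+2:ℕ):ℤ), j) = (x + (k:ℤ) + 2, j) := by push_cast; ring_nf
      rw [hx]
      exact hC this

include hC in
lemma fill_left {a b j x : ℤ}
    (hB : ∀ z, a ≤ z → z ≤ b → (z, j - 1) ∈ C)
    (h0 : (x, j) ∈ C) (h1 : (x + 1, j) ∈ C) (hxb : x ≤ b + 1) :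
    ∀ k : ℕ, a ≤ x - k → (x - k, j) ∈ C := by
  intro k
  induction k using Nat.strong_induction_on with
  | _ k ih =>
    match k with
    | 0 => intro _; simpa using h0
    | 1 =>
      intro ha
      push_cast at ha ⊢
      have hb2 : (x - 1, j - 1) ∈ C := hB _ (by omega) (by omega)
      have := mem_op_of (S := C) (x - 1, j) (1,0) (2,0) (0,-1)
        (by simp [nbhd]) (by simp [nbhd]) (by simp [nbhd])
        (by decide) (by decide) (by decide)
        (by rw [prodmk_add]; convert h0 using 2 <;> ring_nf)
        (by rw [prodmk_add]; convert h1 using 2 <;> ring_nf)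
        (by rw [prodmk_add]; convert hb2 using 2 <;> ring)
      exact hC this
    | (k+2) =>
      intro ha
      push_cast at ha
      have hm1 : (x - ((k+1:ℕ):ℤ), j) ∈ C := ih (k+1) (by omega) (by push_cast; omega)
      have hm2 : (x - ((k:ℕ):ℤ), j) ∈ C := ih k (by omega) (by push_cast; omega)
      have hb2 : (x - (k:ℤ) - 2, j - 1) ∈ C := hB _ (by omega) (by omega)
      have := mem_op_of (S := C) (x - (k:ℤ) - 2, j) (1,0) (2,0) (0,-1)
        (by simp [nbhd]) (by simp [nbhd]) (by simp [nbhd])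
        (by decide) (by decide) (by decide)
        (by rw [prodmk_add]; push_cast at hm1 ⊢; convert hm1 using 2 <;> ring_nf)
        (by rw [prodmk_add]; push_cast at hm2 ⊢; convert hm2 using 2 <;> ring_nf)
        (by rw [prodmk_add]; convert hb2 using 2 <;> ring)
      have hx : (x - ((k+2:ℕ):ℤ), j) = (x - (k:ℤ) - 2, j) := by push_cast; ring_nf
      rw [hx]
      exact hC this

include hC in
lemma fill_row {a b j x : ℤ}
    (hB : ∀ z, a ≤ z → z ≤ b → (z, j - 1) ∈ C)
    (h0 : (x, j) ∈ C) (h1 : (x + 1, j) ∈ C) (hx1 : a - 2 ≤ x) (hx2 : x ≤ b + 1) :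
    ∀ z, a ≤ z → z ≤ b → (z, j) ∈ C := by
  intro z hza hzb
  rcases le_or_gt x z with h | h
  · obtain ⟨k, hk⟩ : ∃ k : ℕ, z = x + k := ⟨(z - x).toNat, by omega⟩
    rw [hk]
    exact fill_right hC hB h0 h1 (by omega) k (by omega)
  · obtain ⟨k, hk⟩ : ∃ k : ℕ, z = x - k := ⟨(x - z).toNat, by omega⟩
    rw [hk]
    exact fill_left hC hB h0 h1 (by omega) k (by omega)

end Fill
section Pairs

variable {C : Set (ℤ × ℤ)} (hC : bootOp nbhd 3 C ⊆ C)

include hC in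
lemma pair_spans {a b j p q : ℤ}
    (hB : ∀ z, a ≤ z → z ≤ b → (z, j - 1) ∈ C)
    (hpa : a ≤ p) (hqb : q ≤ b) (hpq : p < q) (h4 : q ≤ p + 4)
    (hp : (p, j) ∈ C) (hq : (q, j) ∈ C) :
    ∀ z, a ≤ z → z ≤ b → (z, j) ∈ C := by
  have step : ∀ w n1 n2 n3, n1 ∈ nbhd → n2 ∈ nbhd → n3 ∈ nbhd → n1 ≠ n2 → n1 ≠ n3 → n2 ≠ n3 →
      w + n1 ∈ C → w + n2 ∈ C → w + n3 ∈ C → w ∈ C :=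
    fun w n1 n2 n3 a1 a2 a3 b1 b2 b3 c1 c2 c3 =>
      hC (mem_op_of w n1 n2 n3 a1 a2 a3 b1 b2 b3 c1 c2 c3)
  have hfill : (p + 1, j) ∈ C → ∀ z, a ≤ z → z ≤ b → (z, j) ∈ C := fun h1 =>
    fill_row hC hB hp h1 (by omega) (by omega)
  rcases (by omega : q = p + 1 ∨ q = p + 2 ∨ q = p + 3 ∨ q = p + 4) with rfl | rfl | rfl | rfl
  · exact hfill hq
  · refine hfill (step (p+1, j) (-1,0) (1,0) (0,-1)
      (by simp [nbhd]) (by simp [nbhd]) (by simp [nbhd]) (by decide) (by decide) (by decide)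
      (by rw [prodmk_add]; convert hp using 2 <;> ring) (by rw [prodmk_add]; convert hq using 2 <;> ring)
      (by rw [prodmk_add]; exact hB _ (by omega) (by omega)))
  · refine hfill (step (p+1, j) (-1,0) (2,0) (0,-1)
      (by simp [nbhd]) (by simp [nbhd]) (by simp [nbhd]) (by decide) (by decide) (by decide)
      (by rw [prodmk_add]; convert hp using 2 <;> ring) (by rw [prodmk_add]; convert hq using 2 <;> ring)
      (by rw [prodmk_add]; exact hB _ (by omega) (by omega)))
  · have h2 : (p + 2, j) ∈ C := step (p+2, j) (-2,0) (2,0) (0,-1)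
      (by simp [nbhd]) (by simp [nbhd]) (by simp [nbhd]) (by decide) (by decide) (by decide)
      (by rw [prodmk_add]; convert hp using 2 <;> ring) (by rw [prodmk_add]; convert hq using 2 <;> ring)
      (by rw [prodmk_add]; exact hB _ (by omega) (by omega))
    refine hfill (step (p+1, j) (-1,0) (1,0) (0,-1)
      (by simp [nbhd]) (by simp [nbhd]) (by simp [nbhd]) (by decide) (by decide) (by decide)
      (by rw [prodmk_add]; convert hp using 2 <;> ring) (by rw [prodmk_add]; convert h2 using 2 <;> ring)
      (by rw [prodmk_add]; exact hB _ (by omega) (by omega)))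

include hC in
lemma pair_above_spans {a b j p w : ℤ}
    (hB : ∀ z, a ≤ z → z ≤ b → (z, j - 1) ∈ C)
    (hpa : a ≤ p) (hpb : p ≤ b) (hwa : a ≤ w) (hwb : w ≤ b)
    (hne : p ≠ w) (hd1 : p ≤ w + 2) (hd2 : w ≤ p + 2)
    (hp : (p, j) ∈ C) (hw : (w, j + 1) ∈ C) :
    ∀ z, a ≤ z → z ≤ b → (z, j) ∈ C := by
  have step : ∀ u n1 n2 n3, n1 ∈ nbhd → n2 ∈ nbhd → n3 ∈ nbhd → n1 ≠ n2 → n1 ≠ n3 → n2 ≠ n3 →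
      u + n1 ∈ C → u + n2 ∈ C → u + n3 ∈ C → u ∈ C :=
    fun u n1 n2 n3 a1 a2 a3 b1 b2 b3 c1 c2 c3 =>
      hC (mem_op_of u n1 n2 n3 a1 a2 a3 b1 b2 b3 c1 c2 c3)
  have hwj : (w, j) ∈ C := by
    rcases (by omega : p = w - 2 ∨ p = w - 1 ∨ p = w + 1 ∨ p = w + 2) with rfl | rfl | rfl | rfl
    · exact step (w, j) (-2,0) (0,1) (0,-1)
        (by simp [nbhd]) (by simp [nbhd]) (by simp [nbhd]) (by decide) (by decide) (by decide)
        (by rw [prodmk_add]; convert hp using 2 <;> ring) (by rw [prodmk_add]; simpa using hw)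
        (by rw [prodmk_add]; exact hB _ (by omega) (by omega))
    · exact step (w, j) (-1,0) (0,1) (0,-1)
        (by simp [nbhd]) (by simp [nbhd]) (by simp [nbhd]) (by decide) (by decide) (by decide)
        (by rw [prodmk_add]; convert hp using 2 <;> ring) (by rw [prodmk_add]; simpa using hw)
        (by rw [prodmk_add]; exact hB _ (by omega) (by omega))
    · exact step (w, j) (1,0) (0,1) (0,-1)
        (by simp [nbhd]) (by simp [nbhd]) (by simp [nbhd]) (by decide) (by decide) (by decide)
        (by rw [prodmk_add]; convert hp using 2 <;> ring) (by rw [prodmk_add]; simpa using hw)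
        (by rw [prodmk_add]; exact hB _ (by omega) (by omega))
    · exact step (w, j) (2,0) (0,1) (0,-1)
        (by simp [nbhd]) (by simp [nbhd]) (by simp [nbhd]) (by decide) (by decide) (by decide)
        (by rw [prodmk_add]; convert hp using 2 <;> ring) (by rw [prodmk_add]; simpa using hw)
        (by rw [prodmk_add]; exact hB _ (by omega) (by omega))
  rcases lt_or_gt_of_ne hne with h | h
  · exact pair_spans hC hB hpa hwb h (by omega) hp hwj
  · exact pair_spans hC hB hwa hpb h (by omega) hwj hp

end Pairs
lemma row_subset_of_fill {a b j : ℤ} {C : Set (ℤ × ℤ)}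
    (h : ∀ z, a ≤ z → z ≤ b → (z, j) ∈ C) :
    (rectF a b j j : Set (ℤ × ℤ)) ⊆ C := by
  intro w hw
  rw [mem_rect_iff] at hw
  have hw2 : w = (w.1, j) := Prod.ext_iff.2 ⟨rfl, by omega⟩
  rw [hw2]
  exact h w.1 hw.1 hw.2.1

lemma SP1 {a b j p q : ℤ} (hpa : a ≤ p) (hqb : q ≤ b) (hpq : p < q) (h4 : q ≤ p + 4) :
    spanningPair a b j {(p, j), (q, j)} := by
  set S := ({(p, j), (q, j)} : Set (ℤ × ℤ)) ∪ (rectF a b (j-1) (j-1) : Set (ℤ × ℤ)) with hS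
  have hC := cl_closed nbhd 3 S
  have hB : ∀ z, a ≤ z → z ≤ b → (z, j - 1) ∈ bsClosure nbhd 3 S := by
    intro z h1 h2
    exact subset_cl nbhd 3 S (Or.inr (mem_rect_iff.2 ⟨h1, h2, le_refl _, le_refl _⟩))
  have hp : ((p, j) : ℤ×ℤ) ∈ bsClosure nbhd 3 S := subset_cl nbhd 3 S (Or.inl (by simp))
  have hq : ((q, j) : ℤ×ℤ) ∈ bsClosure nbhd 3 S := subset_cl nbhd 3 S (Or.inl (by simp))
  exact row_subset_of_fill (pair_spans hC hB hpa hqb hpq h4 hp hq)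

lemma SP2 {a b j p w : ℤ} (hpa : a ≤ p) (hpb : p ≤ b) (hwa : a ≤ w) (hwb : w ≤ b)
    (hne : p ≠ w) (hd1 : p ≤ w + 2) (hd2 : w ≤ p + 2) :
    spanningPair a b j {(p, j), (w, j + 1)} := by
  set S := ({(p, j), (w, j + 1)} : Set (ℤ × ℤ)) ∪ (rectF a b (j-1) (j-1) : Set (ℤ × ℤ)) with hS
  have hC := cl_closed nbhd 3 S
  have hB : ∀ z, a ≤ z → z ≤ b → (z, j - 1) ∈ bsClosure nbhd 3 S := by
    intro z h1 h2
    exact subset_cl nbhd 3 S (Or.inr (mem_rect_iff.2 ⟨h1, h2, le_refl _, le_refl _⟩))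
  have hp : ((p, j) : ℤ×ℤ) ∈ bsClosure nbhd 3 S := subset_cl nbhd 3 S (Or.inl (by simp))
  have hw : ((w, j + 1) : ℤ×ℤ) ∈ bsClosure nbhd 3 S := subset_cl nbhd 3 S (Or.inl (by simp))
  exact row_subset_of_fill (pair_above_spans hC hB hpa hpb hwa hwb hne hd1 hd2 hp hw)

lemma ncard_le_two {s : Set (ℤ × ℤ)} {p q : ℤ × ℤ} (h : s ⊆ {p, q}) : s.ncard ≤ 2 :=
  le_trans (Set.ncard_le_ncard h ((Set.finite_singleton _).insert _))
    (le_trans (Set.ncard_insert_le _ _) (by simp))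

lemma rect_closed (a b c d : ℤ) :
    bootOp nbhd 3 (rectF a b c d : Set (ℤ × ℤ)) ⊆ (rectF a b c d : Set (ℤ × ℤ)) := by
  intro v hv
  rcases hv with h | h
  · exact h
  simp only [Set.mem_setOf_eq] at h
  by_contra hvR
  rw [mem_rect_iff] at hvR
  have hbound : (((fun n => v + n) '' (nbhd : Set (ℤ × ℤ))) ∩ (rectF a b c d : Set (ℤ × ℤ))).ncard ≤ 2 := by
    by_cases hy : c ≤ v.2 ∧ v.2 ≤ d
    · have hx' : v.1 < a ∨ b < v.1 := by
        by_contra hcon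
        push_neg at hcon
        exact hvR ⟨hcon.1, hcon.2, hy.1, hy.2⟩
      rcases hx' with hx | hx
      · refine ncard_le_two (p := v + (1,0)) (q := v + (2,0)) ?_
        rintro e ⟨⟨n, hn, rfl⟩, heR⟩
        rw [mem_rect_iff] at heR
        rcases nbhd_cases (by simpa using hn) with rfl | rfl | rfl | rfl | rfl | rfl <;>
          simp only [Prod.fst_add, Prod.snd_add] at heR <;> first | (simp; done) | (exfalso; omega)
      · refine ncard_le_two (p := v + (-1,0)) (q := v + (-2,0)) ?_
        rintro e ⟨⟨n, hn, rfl⟩, heR⟩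
        rw [mem_rect_iff] at heR
        rcases nbhd_cases (by simpa using hn) with rfl | rfl | rfl | rfl | rfl | rfl <;>
          simp only [Prod.fst_add, Prod.snd_add] at heR <;> first | (simp; done) | (exfalso; omega)
    · have hy' : v.2 < c ∨ d < v.2 := by
        by_contra hcon
        push_neg at hcon
        exact hy ⟨hcon.1, hcon.2⟩
      refine ncard_le_two (p := v + (0,1)) (q := v + (0,-1)) ?_
      rintro e ⟨⟨n, hn, rfl⟩, heR⟩
      rw [mem_rect_iff] at heR
      rcases nbhd_cases (by simpa using hn) with rfl | rfl | rfl | rfl | rfl | rfl <;>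
        simp only [Prod.fst_add, Prod.snd_add] at heR <;> first | (simp; done) | (exfalso; omega)
  omega
lemma nbhd_classify {n : ℤ × ℤ} (hn : n ∈ nbhd) (hne : n ≠ ((0:ℤ),(-1:ℤ))) :
    (n.2 = 0 ∧ n.1 ≠ 0 ∧ -2 ≤ n.1 ∧ n.1 ≤ 2) ∨ n = ((0:ℤ),(1:ℤ)) := by
  rcases nbhd_cases hn with rfl|rfl|rfl|rfl|rfl|rfl <;>
    first
      | (exact absurd rfl hne)
      | (exact Or.inr rfl)
      | (exact Or.inl ⟨rfl, by norm_num, by norm_num, by norm_num⟩)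

theorem stmt8 (a b c d : ℤ) (hab : a + 1 ≤ b) (hcd : c ≤ d)
    (A : Set (ℤ × ℤ)) (hA : A ⊆ (rectF a b c d : Set (ℤ × ℤ))) :
    upTrav a b c d A ↔
      ∀ j : ℤ, c ≤ j → j ≤ d →
        ∃ u v : ℤ × ℤ, u ∈ bsClosure nbhd 3 A ∧ v ∈ bsClosure nbhd 3 A ∧ u ≠ v ∧
          spanningPair a b j {u, v} := by
  constructor
  · intro hUp j hjc hjd
    have hRcl : (rectF a b c d : Set (ℤ×ℤ)) ⊆
        bsClosure nbhd 3 (A ∪ (rectF a b (c-1) (c-1) : Set (ℤ×ℤ))) := by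
      have h := hUp
      unfold upTrav at h
      rwa [Set.inter_eq_self_of_subset_right hA] at h
    by_contra hno
    push_neg at hno
    set T := bsClosure nbhd 3 A with hTdef
    have hTR : T ⊆ (rectF a b c d : Set (ℤ×ℤ)) := cl_min nbhd 3 hA (rect_closed a b c d)
    have GOODH : ∀ e1 e2 : ℤ × ℤ, e1 ∈ T → e2 ∈ T → e1.2 = j → e2.2 = j →
        e1.1 ≠ e2.1 → e1.1 ≤ e2.1 + 4 → e2.1 ≤ e1.1 + 4 → False := by
      intro e1 e2 h1 h2 hj1 hj2 hne h4a h4b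
      have hb1 := mem_rect_iff.1 (hTR h1)
      have hb2 := mem_rect_iff.1 (hTR h2)
      have he1 : e1 = (e1.1, j) := Prod.ext_iff.2 ⟨rfl, hj1⟩
      have he2 : e2 = (e2.1, j) := Prod.ext_iff.2 ⟨rfl, hj2⟩
      have hnee : e1 ≠ e2 := fun h => hne (congrArg Prod.fst h)
      rcases lt_or_gt_of_ne hne with h | h
      · exact hno e1 e2 h1 h2 hnee (by rw [he1, he2]; exact SP1 hb1.1 hb2.2.1 h (by omega))
      · refine hno e1 e2 h1 h2 hnee ?_
        rw [he1, he2, Set.pair_comm]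
        exact SP1 hb2.1 hb1.2.1 h (by omega)
    have GOODV : ∀ e1 e2 : ℤ × ℤ, e1 ∈ T → e2 ∈ T → e1.2 = j → e2.2 = j + 1 →
        e1.1 ≠ e2.1 → e1.1 ≤ e2.1 + 2 → e2.1 ≤ e1.1 + 2 → False := by
      intro e1 e2 h1 h2 hj1 hj2 hne h4a h4b
      have hb1 := mem_rect_iff.1 (hTR h1)
      have hb2 := mem_rect_iff.1 (hTR h2)
      have he1 : e1 = (e1.1, j) := Prod.ext_iff.2 ⟨rfl, hj1⟩
      have he2 : e2 = (e2.1, j + 1) := Prod.ext_iff.2 ⟨rfl, hj2⟩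
      have hnee : e1 ≠ e2 := by intro h; rw [h, hj2] at hj1; omega
      exact hno e1 e2 h1 h2 hnee
        (by rw [he1, he2]; exact SP2 hb1.1 hb1.2.1 hb2.1 hb2.2.1 hne h4a h4b)
    set U := T ∪ {p : ℤ × ℤ | p.2 ≤ j - 1} with hUdef
    have hUc : bootOp nbhd 3 U ⊆ U := by
      intro v hv
      by_contra hvU
      have hvT : v ∉ T := fun h' => hvU (Or.inl h')
      have hvy : j ≤ v.2 := by
        by_contra hy
        exact hvU (Or.inr (by simp only [Set.mem_setOf_eq]; omega))
      rcases hv with h | h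
      · exact hvU h
      simp only [Set.mem_setOf_eq] at h
      rcases eq_or_lt_of_le hvy with hvj | hvj
      · -- v.2 = j (hvj : j = v.2)
        set Y := (((fun n => v + n) '' (nbhd : Set (ℤ×ℤ))) ∩ T) \ {v + ((0:ℤ),(-1:ℤ))} with hYdef
        have hYfin : Y.Finite := ((img_finite nbhd v).inter_of_left _).diff
        have hXsub : ((fun n => v + n) '' (nbhd : Set (ℤ×ℤ))) ∩ U ⊆
            insert (v + ((0:ℤ),(-1:ℤ))) Y := by
          rintro e ⟨⟨n, hn, rfl⟩, heU⟩
          by_cases hbe : v + n = v + ((0:ℤ),(-1:ℤ))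
          · show v + n ∈ _
            rw [hbe]; exact Set.mem_insert _ _
          · show v + n ∈ _
            refine Set.mem_insert_of_mem _ ⟨⟨⟨n, hn, rfl⟩, ?_⟩, hbe⟩
            rcases heU with h' | h'
            · exact h'
            · exfalso
              simp only [Set.mem_setOf_eq, Prod.snd_add] at h'
              rcases nbhd_cases (by simpa using hn) with rfl|rfl|rfl|rfl|rfl|rfl <;>
                first
                  | (exact hbe rfl)
                  | (simp only [] at h'; omega)
        have h2Y : 2 ≤ Y.ncard := by
          have hle := Set.ncard_le_ncard hXsub (hYfin.insert _)
          have hle2 := Set.ncard_insert_le (v + ((0:ℤ),(-1:ℤ))) Y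
          omega
        obtain ⟨e1, he1, e2, he2, hnee⟩ := (Set.one_lt_ncard hYfin).1 (by omega)
        obtain ⟨⟨⟨n1, hn1, rfl⟩, he1T⟩, he1b⟩ := he1
        obtain ⟨⟨⟨n2, hn2, rfl⟩, he2T⟩, he2b⟩ := he2
        have hne1 : n1 ≠ ((0:ℤ),(-1:ℤ)) := fun hh => he1b (by rw [hh]; exact Set.mem_singleton _)
        have hne2 : n2 ≠ ((0:ℤ),(-1:ℤ)) := fun hh => he2b (by rw [hh]; exact Set.mem_singleton _)
        have hn12 : n1 ≠ n2 := fun hh => hnee (by rw [hh])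
        rcases nbhd_classify (by simpa using hn1) hne1 with hc1 | rfl
        · rcases nbhd_classify (by simpa using hn2) hne2 with hc2 | rfl
          · -- both horizontal
            have hfst : n1.1 ≠ n2.1 := fun hh =>
              hn12 (Prod.ext_iff.2 ⟨hh, by omega⟩)
            exact GOODH (v + n1) (v + n2) he1T he2T
              (by rw [Prod.snd_add]; omega) (by rw [Prod.snd_add]; omega)
              (by simp only [Prod.fst_add]; omega)
              (by simp only [Prod.fst_add]; omega) (by simp only [Prod.fst_add]; omega)
          · -- n2 = (0,1)
            exact GOODV (v + n1) (v + ((0:ℤ),(1:ℤ))) he1T he2T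
              (by rw [Prod.snd_add]; omega) (by rw [Prod.snd_add]; simp; omega)
              (by simp only [Prod.fst_add]; simp; omega)
              (by simp only [Prod.fst_add]; simp; omega)
              (by simp only [Prod.fst_add]; simp; omega)
        · rcases nbhd_classify (by simpa using hn2) hne2 with hc2 | rfl
          · exact GOODV (v + n2) (v + ((0:ℤ),(1:ℤ))) he2T he1T
              (by rw [Prod.snd_add]; omega) (by rw [Prod.snd_add]; simp; omega)
              (by simp only [Prod.fst_add]; simp; omega)
              (by simp only [Prod.fst_add]; simp; omega)
              (by simp only [Prod.fst_add]; simp; omega)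
          · exact hnee rfl
      · -- j < v.2
        have hXT : ((fun n => v + n) '' (nbhd : Set (ℤ×ℤ))) ∩ U ⊆
            ((fun n => v + n) '' (nbhd : Set (ℤ×ℤ))) ∩ T := by
          rintro e ⟨⟨n, hn, rfl⟩, heU⟩
          refine ⟨⟨n, hn, rfl⟩, ?_⟩
          rcases heU with h' | h'
          · exact h'
          · exfalso
            simp only [Set.mem_setOf_eq, Prod.snd_add] at h'
            rcases nbhd_cases (by simpa using hn) with rfl|rfl|rfl|rfl|rfl|rfl <;>
              simp only [] at h' <;> omega
        have hvb : v ∈ bootOp nbhd 3 T := Or.inr (by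
          simp only [Set.mem_setOf_eq]
          exact le_trans h (Set.ncard_le_ncard hXT ((img_finite nbhd v).inter_of_left _)))
        exact hvT (cl_closed nbhd 3 A hvb)
    have hABU : A ∪ (rectF a b (c-1) (c-1) : Set (ℤ×ℤ)) ⊆ U := by
      rintro p (hp | hp)
      · exact Or.inl (subset_cl nbhd 3 A hp)
      · refine Or.inr ?_
        simp only [Set.mem_setOf_eq]
        have hm := mem_rect_iff.1 hp
        omega
    have hclU := cl_min nbhd 3 hABU hUc
    have hmem : ∀ x : ℤ, a ≤ x → x ≤ b → ((x, j) : ℤ×ℤ) ∈ T := by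
      intro x h1 h2
      have hx : ((x, j) : ℤ×ℤ) ∈ U := hclU (hRcl (mem_rect_iff.2 ⟨h1, h2, hjc, hjd⟩))
      rcases hx with h' | h'
      · exact h'
      · simp only [Set.mem_setOf_eq] at h'; omega
    exact GOODH (a, j) (a + 1, j) (hmem a le_rfl (by omega)) (hmem (a+1) (by omega) hab)
      rfl rfl (by omega) (by omega) (by omega)
  · intro hsp
    unfold upTrav
    rw [Set.inter_eq_self_of_subset_right hA]
    set C := bsClosure nbhd 3 (A ∪ (rectF a b (c-1) (c-1) : Set (ℤ×ℤ))) with hCdef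
    have hCc : bootOp nbhd 3 C ⊆ C := cl_closed nbhd 3 _
    have hAC : bsClosure nbhd 3 A ⊆ C :=
      cl_min nbhd 3 (Set.subset_union_left.trans (subset_cl nbhd 3 _)) hCc
    have key : ∀ j : ℤ, c ≤ j → (j ≤ d → ∀ x : ℤ, a ≤ x → x ≤ b → ((x, j) : ℤ×ℤ) ∈ C) := by
      refine Int.le_induction ?_ ?_
      · intro hjd x h1 h2
        obtain ⟨u, v, huA, hvA, hne, hspan⟩ := hsp c le_rfl hcd
        have hsub : ({u, v} : Set (ℤ×ℤ)) ∪ (rectF a b (c-1) (c-1) : Set (ℤ×ℤ)) ⊆ C := by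
          rintro p (hp | hp)
          · rcases hp with rfl | rfl
            · exact hAC huA
            · exact hAC hvA
          · exact subset_cl nbhd 3 _ (Or.inr hp)
        exact cl_min nbhd 3 hsub hCc (hspan (mem_rect_iff.2 ⟨h1, h2, le_rfl, le_rfl⟩))
      · intro j hcj ih hjd x h1 h2
        obtain ⟨u, v, huA, hvA, hne, hspan⟩ := hsp (j+1) (by omega) hjd
        have hsub : ({u, v} : Set (ℤ×ℤ)) ∪ (rectF a b (j+1-1) (j+1-1) : Set (ℤ×ℤ)) ⊆ C := by
          rintro p (hp | hp)
          · rcases hp with rfl | rfl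
            · exact hAC huA
            · exact hAC hvA
          · have hm := mem_rect_iff.1 hp
            have hpp : p = (p.1, j) := Prod.ext_iff.2 ⟨rfl, by omega⟩
            rw [hpp]
            exact ih (by omega) p.1 hm.1 hm.2.1
        exact cl_min nbhd 3 hsub hCc (hspan (mem_rect_iff.2 ⟨h1, h2, le_rfl, le_rfl⟩))
    intro w hw
    have hm := mem_rect_iff.1 hw
    exact key w.2 hm.2.2.1 hm.2.2.2 w.1 hm.1 hm.2.1
end

section
/- Let R be a rectangle with dimensions (x,y) and let p ∈ (0,1). Then P_p(S ∩ R ∈ U_0(R)) ≤ (8p²x + 8p)^y, where U_0(R) is the collection of subsets of R that contain some member of F_0(R). -/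
open Real

def F0 (a b c d : ℤ) : Set (Set (ℤ × ℤ)) :=
  {A | A ⊆ (rectF a b c d : Set (ℤ × ℤ)) ∧ upTrav a b c d A ∧
    (∀ A' : Set (ℤ × ℤ), A' ⊂ A → ¬ upTrav a b c d A') ∧
    ∀ j : ℤ, c ≤ j → j ≤ d →
      ∃ u v : ℤ × ℤ, u ∈ A ∧ v ∈ A ∧ u ≠ v ∧ spanningPair a b j {u, v}}

def U0 (a b c d : ℤ) : Set (Set (ℤ × ℤ)) := {S | ∃ A ∈ F0 a b c d, A ⊆ S}

lemma sum_weights_eq_one (F : Finset (ℤ×ℤ)) (p : ℝ) :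
    ∑ T ∈ F.powerset, p ^ T.card * (1-p) ^ (F.card - T.card) = 1 := by
  have h := Finset.prod_add (fun _ : ℤ×ℤ => p) (fun _ => 1-p) F
  simp only [Finset.prod_const] at h
  have h2 : ∀ T ∈ F.powerset, p ^ T.card * (1-p) ^ (F \ T).card
      = p ^ T.card * (1-p) ^ (F.card - T.card) := by
    intro T hT
    rw [Finset.card_sdiff_of_subset (Finset.mem_powerset.1 hT)]
  rw [Finset.sum_congr rfl h2] at h
  rw [← h]; simp


section
variable (F : Finset (ℤ×ℤ)) (p : ℝ) (hp0 : 0 < p) (hp1 : p < 1)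

lemma weight_nonneg (hp0 : 0 < p) (hp1 : p < 1) (T : Finset (ℤ×ℤ)) (n : ℕ) :
    0 ≤ p ^ T.card * (1-p) ^ n := by
  have : (0:ℝ) ≤ 1 - p := by linarith
  positivity

open Classical in
lemma prob_mono (hp0 : 0 < p) (hp1 : p < 1) {E E' : Set (ℤ×ℤ) → Prop}
    (h : ∀ T ∈ F.powerset, E (T : Set (ℤ×ℤ)) → E' (T : Set (ℤ×ℤ))) :
    prob F p E ≤ prob F p E' := by
  unfold prob
  apply Finset.sum_le_sum
  intro T hT
  by_cases hE : E (T : Set (ℤ×ℤ))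
  · simp only [if_pos hE, if_pos (h T hT hE)]; exact le_refl _
  · simp only [if_neg hE]
    split
    · exact weight_nonneg p hp0 hp1 T _
    · exact le_refl _
      
lemma prob_subset_le (hp0 : 0 < p) (hp1 : p < 1) (H : Finset (ℤ×ℤ)) :
    prob F p (fun S => ↑H ⊆ S) ≤ p ^ H.card := by
  classical
  by_cases hHF : H ⊆ F
  · unfold prob
    have hco : ∀ T : Finset (ℤ×ℤ), ((H:Set (ℤ×ℤ)) ⊆ (T:Set (ℤ×ℤ))) ↔ H ⊆ T := by
      intro T; exact Finset.coe_subset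
    calc ∑ T ∈ F.powerset, (if (H:Set (ℤ×ℤ)) ⊆ (T:Set (ℤ×ℤ)) then p ^ T.card * (1 - p) ^ (F.card - T.card) else 0)
        = ∑ T ∈ F.powerset.filter (fun T => H ⊆ T), p ^ T.card * (1 - p) ^ (F.card - T.card) := by
          rw [Finset.sum_filter]
          exact Finset.sum_congr rfl (fun T _ => by simp [hco T])
      _ = ∑ T' ∈ (F \ H).powerset, p ^ H.card * (p ^ T'.card * (1 - p) ^ ((F \ H).card - T'.card)) := by
          apply Finset.sum_nbij' (fun T => T \ H) (fun T' => T' ∪ H)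
          · intro T hT
            simp only [Finset.mem_filter, Finset.mem_powerset] at hT
            simp only [Finset.mem_powerset]
            exact fun x hx => Finset.mem_sdiff.2 ⟨hT.1 (Finset.mem_sdiff.1 hx).1, (Finset.mem_sdiff.1 hx).2⟩
          · intro T' hT'
            simp only [Finset.mem_powerset] at hT'
            simp only [Finset.mem_filter, Finset.mem_powerset]
            constructor
            · exact Finset.union_subset (fun x hx => (Finset.mem_sdiff.1 (hT' hx)).1) hHF
            · exact Finset.subset_union_right
          · intro T hT
            simp only [Finset.mem_filter, Finset.mem_powerset] at hT
            exact Finset.sdiff_union_of_subset hT.2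
          · intro T' hT'
            simp only [Finset.mem_powerset] at hT'
            have : Disjoint T' H := by
              rw [Finset.disjoint_left]
              intro x hx
              exact (Finset.mem_sdiff.1 (hT' hx)).2
            rw [Finset.union_sdiff_right, Finset.sdiff_eq_self_of_disjoint this]
          · intro T hT
            simp only [Finset.mem_filter, Finset.mem_powerset] at hT
            have h1 : (T \ H).card = T.card - H.card := Finset.card_sdiff_of_subset hT.2
            have h2 : (F \ H).card = F.card - H.card := Finset.card_sdiff_of_subset hHF
            have h3 : H.card ≤ T.card := Finset.card_le_card hT.2
            have h4 : T.card ≤ F.card := Finset.card_le_card hT.1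
            rw [h1, h2, ← mul_assoc, ← pow_add]
            congr 2
            · omega
            · omega
      _ = p ^ H.card * ∑ T' ∈ (F \ H).powerset, p ^ T'.card * (1 - p) ^ ((F \ H).card - T'.card) := by
          rw [Finset.mul_sum]
      _ = p ^ H.card := by rw [sum_weights_eq_one]; ring
      _ ≤ p ^ H.card := le_refl _
  · have : ∀ T ∈ F.powerset, ¬ ((H:Set (ℤ×ℤ)) ⊆ (T:Set (ℤ×ℤ))) := by
      intro T hT hc
      exact hHF (le_trans (Finset.coe_subset.1 hc) (Finset.mem_powerset.1 hT))
    unfold prob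
    rw [Finset.sum_congr rfl (fun T hT => if_neg (this T hT))]
    simp
    positivity

open Classical in
lemma prob_union_bound (hp0 : 0 < p) (hp1 : p < 1) (Hs : Finset (Finset (ℤ×ℤ))) :
    prob F p (fun S => ∃ H ∈ Hs, (H:Set (ℤ×ℤ)) ⊆ S) ≤ ∑ H ∈ Hs, p ^ H.card := by
  classical
  have step1 : prob F p (fun S => ∃ H ∈ Hs, (H:Set (ℤ×ℤ)) ⊆ S)
      ≤ ∑ H ∈ Hs, prob F p (fun S => (H:Set (ℤ×ℤ)) ⊆ S) := by
    unfold prob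
    rw [Finset.sum_comm]
    apply Finset.sum_le_sum
    intro T hT
    by_cases hE : ∃ H ∈ Hs, (H:Set (ℤ×ℤ)) ⊆ (T:Set (ℤ×ℤ))
    · obtain ⟨H0, hH0, hsub⟩ := hE
      rw [if_pos ⟨H0, hH0, hsub⟩]
      have hs := Finset.single_le_sum (f := fun H : Finset (ℤ×ℤ) => if (H:Set (ℤ×ℤ)) ⊆ (T:Set (ℤ×ℤ)) then p ^ T.card * (1 - p) ^ (F.card - T.card) else 0)
        (fun i _ => by
          split
          · exact weight_nonneg p hp0 hp1 T _
          · exact le_refl _) hH0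
      rw [if_pos hsub] at hs
      exact hs
    · rw [if_neg hE]
      apply Finset.sum_nonneg
      intro i _
      split
      · exact weight_nonneg p hp0 hp1 T _
      · exact le_refl _
  refine le_trans step1 (Finset.sum_le_sum (fun H _ => prob_subset_le F p hp0 hp1 H))
end

lemma bsClosure_subset_of_closed (N : Finset (ℤ × ℤ)) (r : ℕ) {S T : Set (ℤ × ℤ)}
    (hS : S ⊆ T) (hT : bootOp N r T ⊆ T) : bsClosure N r S ⊆ T := by
  apply Set.iUnion_subset
  intro t
  induction t with
  | zero => exact hS
  | succ n ih =>
    rw [Function.iterate_succ_apply']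
    refine subset_trans ?_ hT
    intro v hv
    rcases hv with hv | hv
    · exact Or.inl (ih hv)
    · right
      refine le_trans hv (Set.ncard_le_ncard (Set.inter_subset_inter_right _ ih) ?_)
      exact ((N.finite_toSet).image _).inter_of_left _

lemma mem_nbhd_image (x y s1 s2 : ℤ) :
    ((s1, s2) ∈ (fun n => (x, y) + n) '' (nbhd : Set (ℤ×ℤ))) ↔
      (s1 = x - 2 ∧ s2 = y) ∨ (s1 = x - 1 ∧ s2 = y) ∨ (s1 = x ∧ s2 = y - 1) ∨
      (s1 = x ∧ s2 = y + 1) ∨ (s1 = x + 1 ∧ s2 = y) ∨ (s1 = x + 2 ∧ s2 = y) := by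
  simp only [nbhd, Finset.coe_insert, Finset.coe_singleton, Set.image_insert_eq,
    Set.image_singleton, Set.mem_insert_iff, Set.mem_singleton_iff, Prod.mk_add_mk,
    Prod.ext_iff]
  omega

set_option maxHeartbeats 1600000 in
lemma closed_halfplane (j : ℤ) (u1 u2 v1 v2 : ℤ)
    (hI : ¬ (u2 = j ∧ v2 = j ∧ u1 ≠ v1 ∧ u1 - v1 ≤ 4 ∧ v1 - u1 ≤ 4))
    (hII : ¬ (u2 = j ∧ v2 = j+1 ∧ u1 ≠ v1 ∧ u1 - v1 ≤ 2 ∧ v1 - u1 ≤ 2))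
    (hII' : ¬ (v2 = j ∧ u2 = j+1 ∧ u1 ≠ v1 ∧ u1 - v1 ≤ 2 ∧ v1 - u1 ≤ 2)) :
    bootOp nbhd 3 ({w : ℤ×ℤ | w.2 ≤ j - 1} ∪ {(u1,u2), (v1,v2)})
      ⊆ ({w : ℤ×ℤ | w.2 ≤ j - 1} ∪ {(u1,u2), (v1,v2)}) := by
  intro w hw
  rcases hw with hw | hw
  · exact hw
  by_contra hwT
  simp only [Set.mem_union, Set.mem_setOf_eq, Set.mem_insert_iff, Set.mem_singleton_iff,
    not_or] at hwT
  obtain ⟨hw1, hw2, hw3⟩ := hwT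
  simp only [Set.mem_setOf_eq] at hw
  obtain ⟨x, y⟩ := w
  simp only at hw1
  have hsub : ((fun n => (x,y) + n) '' (nbhd : Set (ℤ×ℤ)))
      ∩ ({w : ℤ×ℤ | w.2 ≤ j - 1} ∪ {(u1,u2), (v1,v2)})
      ⊆ {(x, y - 1), (u1,u2), (v1,v2)} := by
    rintro ⟨s1, s2⟩ ⟨hsN, hsT⟩
    rw [mem_nbhd_image] at hsN
    rcases hsT with hs | hs
    · simp only [Set.mem_setOf_eq] at hs
      left
      simp only [Prod.ext_iff]
      omega
    · simp only [Set.mem_insert_iff, Set.mem_singleton_iff] at hs ⊢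
      rcases hs with hs | hs
      · right; left; exact hs
      · right; right; exact hs
  have hpair_le : ∀ (x y : ℤ×ℤ), ({x, y} : Set (ℤ×ℤ)).ncard ≤ 2 := by
    intro x y
    refine le_trans (Set.ncard_insert_le _ _) ?_
    simp [Set.ncard_singleton]
  have htripfin : ({((x:ℤ), y - 1), (u1,u2), (v1,v2)} : Set (ℤ×ℤ)).Finite :=
    (((Set.finite_singleton _).insert _).insert _)
  have hcard3 : ({((x:ℤ), y - 1), (u1,u2), (v1,v2)} : Set (ℤ×ℤ)).ncard ≤ 3 := by
    refine le_trans (Set.ncard_insert_le _ _) ?_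
    have := hpair_le (u1,u2) (v1,v2)
    omega
  have heq := Set.eq_of_subset_of_ncard_le hsub (le_trans hcard3 hw) htripfin
  have key : ∀ (P Q : ℤ×ℤ), ({((x:ℤ), y - 1), (u1,u2), (v1,v2)} : Set (ℤ×ℤ)) ⊆ {P, Q} → False := by
    intro P Q hPQ
    have h1 := Set.ncard_le_ncard (hsub.trans hPQ) ((Set.finite_singleton Q).insert P)
    have h2 := hpair_le P Q
    omega
  have hne1 : ((x:ℤ), y-1) ≠ (u1,u2) := by
    intro h
    apply key (u1,u2) (v1,v2)
    rw [h]
    intro z hz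
    simp only [Set.mem_insert_iff, Set.mem_singleton_iff] at hz ⊢
    tauto
  have hne2 : ((x:ℤ), y-1) ≠ (v1,v2) := by
    intro h
    apply key (u1,u2) (v1,v2)
    rw [h]
    intro z hz
    simp only [Set.mem_insert_iff, Set.mem_singleton_iff] at hz ⊢
    tauto
  have hneuv : ((u1:ℤ),u2) ≠ (v1,v2) := by
    intro h
    apply key ((x:ℤ), y-1) (v1,v2)
    rw [h]
    intro z hz
    simp only [Set.mem_insert_iff, Set.mem_singleton_iff] at hz ⊢
    tauto
  have hA0mem : ((x:ℤ), y-1) ∈ ((fun n => (x,y) + n) '' (nbhd : Set (ℤ×ℤ)))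
      ∩ ({w : ℤ×ℤ | w.2 ≤ j - 1} ∪ {(u1,u2), (v1,v2)}) := by
    rw [heq]; exact Set.mem_insert _ _
  have humem : ((u1:ℤ), u2) ∈ ((fun n => (x,y) + n) '' (nbhd : Set (ℤ×ℤ)))
      ∩ ({w : ℤ×ℤ | w.2 ≤ j - 1} ∪ {(u1,u2), (v1,v2)}) := by
    rw [heq]; right; exact Set.mem_insert _ _
  have hvmem : ((v1:ℤ), v2) ∈ ((fun n => (x,y) + n) '' (nbhd : Set (ℤ×ℤ)))
      ∩ ({w : ℤ×ℤ | w.2 ≤ j - 1} ∪ {(u1,u2), (v1,v2)}) := by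
    rw [heq]; right; right; rfl
  have hwj : y = j := by
    rcases hA0mem.2 with h | h
    · simp only [Set.mem_setOf_eq] at h
      omega
    · rcases h with h | h
      · exact absurd h hne1
      · exact absurd h hne2
  have hu := humem.1
  have hv := hvmem.1
  rw [mem_nbhd_image] at hu hv
  simp only [ne_eq, Prod.mk.injEq, not_and] at hne1 hne2 hneuv
  omega

lemma geom (a b j : ℤ) (u v : ℤ × ℤ) (hsp : spanningPair a b j {u, v}) :
    (u.2 = j ∧ v.2 = j ∧ u.1 ≠ v.1 ∧ u.1 - v.1 ≤ 4 ∧ v.1 - u.1 ≤ 4) ∨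
    (u.2 = j ∧ v.2 = j+1 ∧ u.1 ≠ v.1 ∧ u.1 - v.1 ≤ 2 ∧ v.1 - u.1 ≤ 2) ∨
    (v.2 = j ∧ u.2 = j+1 ∧ u.1 ≠ v.1 ∧ u.1 - v.1 ≤ 2 ∧ v.1 - u.1 ≤ 2) ∨
    (∀ x : ℤ, a ≤ x → x ≤ b → (x, j) = u ∨ (x, j) = v) := by
  by_cases hI : (u.2 = j ∧ v.2 = j ∧ u.1 ≠ v.1 ∧ u.1 - v.1 ≤ 4 ∧ v.1 - u.1 ≤ 4)
  · exact Or.inl hI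
  by_cases hII : (u.2 = j ∧ v.2 = j+1 ∧ u.1 ≠ v.1 ∧ u.1 - v.1 ≤ 2 ∧ v.1 - u.1 ≤ 2)
  · exact Or.inr (Or.inl hII)
  by_cases hII' : (v.2 = j ∧ u.2 = j+1 ∧ u.1 ≠ v.1 ∧ u.1 - v.1 ≤ 2 ∧ v.1 - u.1 ≤ 2)
  · exact Or.inr (Or.inr (Or.inl hII'))
  refine Or.inr (Or.inr (Or.inr ?_))
  intro x hx1 hx2
  have hclosed := closed_halfplane j u.1 u.2 v.1 v.2 hI hII hII'
  have hbase : ({u, v} : Set (ℤ×ℤ)) ∪ (rectF a b (j-1) (j-1) : Set (ℤ×ℤ))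
      ⊆ ({w : ℤ×ℤ | w.2 ≤ j - 1} ∪ {(u.1,u.2), (v.1,v.2)}) := by
    intro z hz
    rcases hz with hz | hz
    · right
      rcases hz with hz | hz
      · left; rw [hz]
      · right; rw [Set.mem_singleton_iff] at hz; rw [hz]; rfl
    · left
      simp only [rectF, Finset.coe_product, Set.mem_prod, Finset.coe_Icc, Set.mem_Icc] at hz
      simp only [Set.mem_setOf_eq]
      omega
  have hcl := bsClosure_subset_of_closed nbhd 3 hbase hclosed
  have hmem : ((x:ℤ), j) ∈ (rectF a b j j : Set (ℤ×ℤ)) := by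
    simp only [rectF, Finset.coe_product, Set.mem_prod, Finset.coe_Icc, Set.mem_Icc]
    omega
  have := hcl (hsp hmem)
  rcases this with h | h
  · simp only [Set.mem_setOf_eq] at h; omega
  · rcases h with h | h
    · left; rw [h]
    · right; rw [Set.mem_singleton_iff] at h; rw [h]

noncomputable def I1 (a b : ℤ) : Finset (ℤ×ℤ) :=
  (Finset.Icc a b ×ˢ Finset.Icc a b).filter (fun q => q.1 < q.2 ∧ q.2 ≤ q.1 + 4)
noncomputable def I2 (a b : ℤ) : Finset (ℤ×ℤ) :=
  (Finset.Icc a b ×ˢ Finset.Icc a b).filter (fun q => q.1 ≠ q.2 ∧ q.1 - q.2 ≤ 2 ∧ q.2 - q.1 ≤ 2)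
noncomputable def cand (a b j : ℤ) : Finset (Finset (ℤ×ℤ)) :=
  (I1 a b).image (fun q => {(q.1, j), (q.2, j)})
    ∪ (I2 a b).image (fun q => {(q.1, j), (q.2, j+1)})
    ∪ (if a = b then {({(a, j)} : Finset (ℤ×ℤ))} else ∅)

lemma cand_struct (a b j : ℤ) (F : Finset (ℤ×ℤ)) (hF : F ∈ cand a b j) :
    (∀ s ∈ F, s.2 = j ∨ s.2 = j + 1) ∧ (F.filter (fun s => s.2 = j)).card ≤ 2 := by
  rcases Finset.mem_union.1 hF with hF | hF
  · rcases Finset.mem_union.1 hF with hF | hF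
    · obtain ⟨q, hq, rfl⟩ := Finset.mem_image.1 hF
      constructor
      · intro s hs
        rcases Finset.mem_insert.1 hs with rfl | hs
        · left; rfl
        · rw [Finset.mem_singleton.1 hs]; left; rfl
      · refine le_trans (Finset.card_filter_le _ _) ?_
        refine le_trans (Finset.card_insert_le _ _) ?_
        simp
    · obtain ⟨q, hq, rfl⟩ := Finset.mem_image.1 hF
      constructor
      · intro s hs
        rcases Finset.mem_insert.1 hs with rfl | hs
        · left; rfl
        · rw [Finset.mem_singleton.1 hs]; right; rfl
      · refine le_trans (Finset.card_filter_le _ _) ?_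
        refine le_trans (Finset.card_insert_le _ _) ?_
        simp
  · split at hF
    · rw [Finset.mem_singleton.1 hF]
      constructor
      · intro s hs
        rw [Finset.mem_singleton.1 hs]; left; rfl
      · refine le_trans (Finset.card_filter_le _ _) ?_
        simp
    · exact absurd hF (Finset.notMem_empty _)

noncomputable def Unions (a b d : ℤ) : ℕ → Finset (Finset (ℤ×ℤ))
  | 0 => {∅}
  | (m+1) => ((cand a b (d - m)) ×ˢ Unions a b d m).image (fun q => q.1 ∪ q.2)

lemma Unions_rows (a b d : ℤ) : ∀ m : ℕ, ∀ H ∈ Unions a b d m,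
    (∀ s ∈ H, d - m + 1 ≤ s.2) ∧ (H.filter (fun s => s.2 = d - m + 1)).card ≤ 2 := by
  intro m
  induction m with
  | zero =>
    intro H hH
    rw [Unions, Finset.mem_singleton] at hH
    subst hH
    simp
  | succ m ih =>
    intro H hH
    rw [Unions] at hH
    obtain ⟨q, hq, rfl⟩ := Finset.mem_image.1 hH
    obtain ⟨hq1, hq2⟩ := Finset.mem_product.1 hq
    obtain ⟨hrow, hcard⟩ := cand_struct a b (d - m) q.1 hq1
    obtain ⟨hrow', hcard'⟩ := ih q.2 hq2
    constructor
    · intro s hs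
      rcases Finset.mem_union.1 hs with hs | hs
      · rcases hrow s hs with h | h <;> omega
      · have := hrow' s hs; omega
    · have hval : ∀ s : ℤ×ℤ, (s.2 = d - ((m+1:ℕ):ℤ) + 1) = (s.2 = d - (m:ℤ)) := by
        intro s
        simp only [eq_iff_iff]
        push_cast
        omega
      simp only [hval]
      rw [Finset.filter_union]
      refine le_trans (Finset.card_union_le _ _) ?_
      have h1 : (q.2.filter (fun s => s.2 = d - (m:ℤ))).card = 0 := by
        rw [Finset.card_eq_zero, Finset.filter_eq_empty_iff]
        intro s hs
        have := hrow' s hs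
        omega
      omega

lemma Unions_cover (a b d : ℤ) : ∀ m : ℕ, ∀ S : Set (ℤ×ℤ),
    (∀ j : ℤ, d - m + 1 ≤ j → j ≤ d → ∃ F ∈ cand a b j, (F : Set (ℤ×ℤ)) ⊆ S) →
    ∃ H ∈ Unions a b d m, (H : Set (ℤ×ℤ)) ⊆ S := by
  intro m
  induction m with
  | zero =>
    intro S _
    exact ⟨∅, Finset.mem_singleton_self _, by simp⟩
  | succ m ih =>
    intro S hS
    obtain ⟨F, hF, hFS⟩ := hS (d - m) (by push_cast; omega) (by omega)
    obtain ⟨H, hH, hHS⟩ := ih S (fun j h1 h2 => hS j (by push_cast at h1 ⊢; omega) h2)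
    refine ⟨F ∪ H, ?_, ?_⟩
    · rw [Unions]
      exact Finset.mem_image.2 ⟨(F, H), Finset.mem_product.2 ⟨hF, hH⟩, rfl⟩
    · rw [Finset.coe_union]
      exact Set.union_subset hFS hHS

lemma sum_insert_le_of_nonneg' {α : Type*} [DecidableEq α] (a : α) (s : Finset α) (g : α → ℝ)
    (h : ∀ b, 0 ≤ g b) : ∑ b ∈ insert a s, g b ≤ g a + ∑ b ∈ s, g b := by
  by_cases ha : a ∈ s
  · rw [Finset.insert_eq_self.2 ha]
    nlinarith [h a]
  · rw [Finset.sum_insert ha]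

lemma sum_image_le' {α β : Type*} [DecidableEq β] (s : Finset α) (f : α → β) (g : β → ℝ)
    (h : ∀ b, 0 ≤ g b) : ∑ b ∈ s.image f, g b ≤ ∑ a ∈ s, g (f a) := by
  classical
  induction s using Finset.induction with
  | empty => simp
  | insert a t ha ih =>
    rw [Finset.image_insert, Finset.sum_insert ha]
    exact le_trans (sum_insert_le_of_nonneg' _ _ _ h) (by linarith)

lemma sum_union_le' {α : Type*} [DecidableEq α] (A B : Finset α) (g : α → ℝ)
    (h : ∀ b, 0 ≤ g b) : ∑ b ∈ A ∪ B, g b ≤ ∑ a ∈ A, g a + ∑ a ∈ B, g a := by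
  rw [show A ∪ B = A ∪ (B \ A) by simp, Finset.sum_union Finset.disjoint_sdiff]
  have := Finset.sum_le_sum_of_subset_of_nonneg (f := g) (Finset.sdiff_subset (s := B) (t := A)) (fun i _ _ => h i)
  linarith

lemma card_Icc14 : (Finset.Icc (1:ℤ) 4).card = 4 := by decide

lemma card_I1 (a b : ℤ) : (I1 a b).card ≤ 4 * (Finset.Icc a b).card := by
  have h := Finset.card_le_card_of_injOn (f := fun q : ℤ×ℤ => (q.1, q.2 - q.1))
    (s := I1 a b) (t := Finset.Icc a b ×ˢ Finset.Icc (1:ℤ) 4)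
    (by
      intro q hq
      simp only [I1, Finset.mem_filter, Finset.mem_product, Finset.mem_Icc, Finset.mem_coe] at hq ⊢
      omega)
    (by
      intro q hq r hr hqr
      simp only [Prod.mk.injEq] at hqr
      have : q.1 = r.1 ∧ q.2 = r.2 := by omega
      exact Prod.ext this.1 this.2)
  rw [Finset.card_product, card_Icc14] at h
  omega

lemma card_I2 (a b : ℤ) : (I2 a b).card ≤ 4 * (Finset.Icc a b).card := by
  have h := Finset.card_le_card_of_injOn (f := fun q : ℤ×ℤ => (q.1, q.2 - q.1))
    (s := I2 a b) (t := Finset.Icc a b ×ˢ ({-2,-1,1,2} : Finset ℤ))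
    (by
      intro q hq
      simp only [I2, Finset.mem_filter, Finset.mem_product, Finset.mem_Icc,
        Finset.mem_insert, Finset.mem_singleton, Finset.mem_coe] at hq ⊢
      omega)
    (by
      intro q hq r hr hqr
      simp only [Prod.mk.injEq] at hqr
      have : q.1 = r.1 ∧ q.2 = r.2 := by omega
      exact Prod.ext this.1 this.2)
  have : (({-2,-1,1,2} : Finset ℤ)).card = 4 := by decide
  rw [Finset.card_product, this] at h
  omega

lemma inner_bound (a b j : ℤ) (hab : a ≤ b) (p : ℝ) (hp0 : 0 < p) (hp1 : p < 1)
    (U : Finset (ℤ×ℤ)) (hU1 : ∀ s ∈ U, j + 1 ≤ s.2)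
    (hU2 : (U.filter (fun s => s.2 = j + 1)).card ≤ 2) :
    ∑ F ∈ cand a b j, p ^ (F \ U).card
      ≤ 8*p^2*(((Finset.Icc a b).card : ℝ)) + 8*p := by
  classical
  have hpnn : ∀ F : Finset (ℤ×ℤ), 0 ≤ p ^ (F \ U).card := fun F => pow_nonneg hp0.le _
  set wn := (Finset.Icc a b).card with hwn
  have hwn1 : 1 ≤ wn := by
    rw [hwn]
    have : a ∈ Finset.Icc a b := by simp [hab]
    exact Finset.card_pos.2 ⟨a, this⟩
  -- row-j points are not in U
  have hrowj : ∀ x : ℤ, ((x, j) : ℤ×ℤ) ∉ U := by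
    intro x hx
    simpa using hU1 _ hx
  -- bound for the I1 part
  have hX : ∑ F ∈ (I1 a b).image (fun q => ({(q.1, j), (q.2, j)} : Finset (ℤ×ℤ))),
      p ^ (F \ U).card ≤ (I1 a b).card * p^2 := by
    refine le_trans (sum_image_le' _ _ _ hpnn) ?_
    have : ∀ q ∈ I1 a b, p ^ ((({(q.1, j), (q.2, j)} : Finset (ℤ×ℤ))) \ U).card = p^2 := by
      intro q hq
      simp only [I1, Finset.mem_filter, Finset.mem_product, Finset.mem_Icc] at hq
      have hd : (({(q.1, j), (q.2, j)} : Finset (ℤ×ℤ))) \ U = {(q.1, j), (q.2, j)} := by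
        rw [Finset.sdiff_eq_self_iff_disjoint, Finset.disjoint_left]
        intro s hs
        rcases Finset.mem_insert.1 hs with rfl | hs
        · exact hrowj _
        · rw [Finset.mem_singleton.1 hs]; exact hrowj _
      rw [hd]
      have hne : ((q.1, j) : ℤ×ℤ) ≠ (q.2, j) := by
        have h12 : q.1 ≠ q.2 := by omega
        exact fun h => h12 (congrArg Prod.fst h)
      rw [Finset.card_insert_of_notMem (by simp [hne]), Finset.card_singleton]
    rw [Finset.sum_congr rfl this, Finset.sum_const, nsmul_eq_mul]
  -- bound for the I2 part
  have hY : ∑ F ∈ (I2 a b).image (fun q => ({(q.1, j), (q.2, j+1)} : Finset (ℤ×ℤ))),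
      p ^ (F \ U).card ≤ (I2 a b).card * p^2 + 8 * p := by
    refine le_trans (sum_image_le' _ _ _ hpnn) ?_
    have hterm : ∀ q ∈ I2 a b, p ^ ((({(q.1, j), (q.2, j+1)} : Finset (ℤ×ℤ))) \ U).card
        ≤ p^2 + (if ((q.2, j+1) : ℤ×ℤ) ∈ U then p else 0) := by
      intro q hq
      simp only [I2, Finset.mem_filter, Finset.mem_product, Finset.mem_Icc] at hq
      by_cases hv : ((q.2, j+1) : ℤ×ℤ) ∈ U
      · rw [if_pos hv]
        have h1 : ((q.1, j) : ℤ×ℤ) ∈ (({(q.1, j), (q.2, j+1)} : Finset (ℤ×ℤ))) \ U :=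
          Finset.mem_sdiff.2 ⟨Finset.mem_insert_self _ _, hrowj _⟩
        have hc : 1 ≤ ((({(q.1, j), (q.2, j+1)} : Finset (ℤ×ℤ))) \ U).card :=
          Finset.card_pos.2 ⟨_, h1⟩
        have := pow_le_pow_of_le_one hp0.le hp1.le hc
        rw [pow_one] at this
        nlinarith [sq_nonneg p]
      · rw [if_neg hv]
        have hd : (({(q.1, j), (q.2, j+1)} : Finset (ℤ×ℤ))) \ U = {(q.1, j), (q.2, j+1)} := by
          rw [Finset.sdiff_eq_self_iff_disjoint, Finset.disjoint_left]
          intro s hs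
          rcases Finset.mem_insert.1 hs with rfl | hs
          · exact hrowj _
          · rw [Finset.mem_singleton.1 hs]; exact hv
        have hne : ((q.1, j) : ℤ×ℤ) ≠ (q.2, j+1) := by
          intro h
          have := congrArg Prod.snd h
          simp at this
        rw [hd, Finset.card_insert_of_notMem (by simp [hne]), Finset.card_singleton]
        have : p ^ (1+1) = p^2 := by norm_num
        rw [this]
        linarith
    refine le_trans (Finset.sum_le_sum hterm) ?_
    rw [Finset.sum_add_distrib, Finset.sum_const, nsmul_eq_mul]
    have hbad : ∑ q ∈ I2 a b, (if ((q.2, j+1) : ℤ×ℤ) ∈ U then p else 0)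
        = (((I2 a b).filter (fun q => ((q.2, j+1) : ℤ×ℤ) ∈ U)).card : ℝ) * p := by
      rw [← Finset.sum_filter, Finset.sum_const, nsmul_eq_mul]
    have hbadcard : ((I2 a b).filter (fun q => ((q.2, j+1) : ℤ×ℤ) ∈ U)).card ≤ 8 := by
      have h := Finset.card_le_card_of_injOn
        (f := fun q : ℤ×ℤ => (((q.2, j+1) : ℤ×ℤ), q.1 - q.2))
        (s := (I2 a b).filter (fun q => ((q.2, j+1) : ℤ×ℤ) ∈ U))
        (t := (U.filter (fun s => s.2 = j + 1)) ×ˢ ({-2,-1,1,2} : Finset ℤ))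
        (by
          intro q hq
          simp only [I2, Finset.mem_filter, Finset.mem_product, Finset.mem_Icc,
            Finset.mem_insert, Finset.mem_singleton, Finset.mem_coe] at hq ⊢
          refine ⟨⟨hq.2, trivial⟩, ?_⟩
          have := hq.1.2
          omega)
        (by
          intro q hq r hr hqr
          simp only [Prod.mk.injEq] at hqr
          have : q.1 = r.1 ∧ q.2 = r.2 := by omega
          exact Prod.ext this.1 this.2)
      have h2 : ((U.filter (fun s => s.2 = j + 1)) ×ˢ ({-2,-1,1,2} : Finset ℤ)).card ≤ 8 := by
        rw [Finset.card_product]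
        have : (({-2,-1,1,2} : Finset ℤ)).card = 4 := by decide
        rw [this]
        omega
      omega
    rw [hbad]
    have : (((I2 a b).filter (fun q => ((q.2, j+1) : ℤ×ℤ) ∈ U)).card : ℝ) * p ≤ 8 * p := by
      have hc : (((I2 a b).filter (fun q => ((q.2, j+1) : ℤ×ℤ) ∈ U)).card : ℝ) ≤ 8 := by
        exact_mod_cast hbadcard
      nlinarith [hp0.le]
    linarith
  -- final assembly
  by_cases hab2 : a = b
  · subst hab2
    have hI1 : I1 a a = ∅ := by
      rw [Finset.eq_empty_iff_forall_notMem]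
      intro q hq
      simp only [I1, Finset.mem_filter, Finset.mem_product, Finset.mem_Icc] at hq
      omega
    have hI2 : I2 a a = ∅ := by
      rw [Finset.eq_empty_iff_forall_notMem]
      intro q hq
      simp only [I2, Finset.mem_filter, Finset.mem_product, Finset.mem_Icc] at hq
      omega
    unfold cand
    rw [hI1, hI2]
    simp only [Finset.image_empty, Finset.empty_union, eq_self_iff_true, if_true]
    rw [Finset.sum_singleton]
    have hd : ({((a:ℤ), j)} : Finset (ℤ×ℤ)) \ U = {(a, j)} := by
      rw [Finset.sdiff_eq_self_iff_disjoint, Finset.disjoint_left]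
      intro s hs
      rw [Finset.mem_singleton.1 hs]
      exact hrowj _
    rw [hd, Finset.card_singleton, pow_one]
    have h1 : (0:ℝ) ≤ 8*p^2*(wn:ℝ) := by positivity
    nlinarith [hp0.le]
  · unfold cand
    rw [if_neg hab2, Finset.union_empty]
    refine le_trans (sum_union_le' _ _ _ hpnn) ?_
    have hc1 : ((I1 a b).card : ℝ) ≤ 4 * (wn:ℝ) := by
      exact_mod_cast card_I1 a b
    have hc2 : ((I2 a b).card : ℝ) ≤ 4 * (wn:ℝ) := by
      exact_mod_cast card_I2 a b
    nlinarith [hX, hY, sq_nonneg p, hp0.le, mul_le_mul_of_nonneg_right hc1 (sq_nonneg p),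
      mul_le_mul_of_nonneg_right hc2 (sq_nonneg p)]

lemma Unions_weight (a b d : ℤ) (hab : a ≤ b) (p : ℝ) (hp0 : 0 < p) (hp1 : p < 1) :
    ∀ m : ℕ, ∑ H ∈ Unions a b d m, p ^ H.card
      ≤ (8*p^2*((Finset.Icc a b).card : ℝ) + 8*p) ^ m := by
  have hM0 : (0:ℝ) ≤ 8*p^2*((Finset.Icc a b).card : ℝ) + 8*p := by positivity
  intro m
  induction m with
  | zero =>
    rw [Unions, Finset.sum_singleton, Finset.card_empty, pow_zero, pow_zero]
  | succ m ih =>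
    rw [Unions, pow_succ]
    refine le_trans (sum_image_le' _ _ _ (fun H => pow_nonneg hp0.le _)) ?_
    rw [Finset.sum_product_right]
    have hinner : ∀ g ∈ Unions a b d m,
        ∑ F ∈ cand a b (d - m), p ^ ((F, g).1 ∪ (F, g).2).card
          ≤ (8*p^2*((Finset.Icc a b).card : ℝ) + 8*p) * p ^ g.card := by
      intro g hg
      have hrows := Unions_rows a b d m g hg
      have hcongr : ∀ F ∈ cand a b (d - m),
          p ^ (F ∪ g).card = p ^ (F \ g).card * p ^ g.card := by
        intro F _
        rw [← pow_add, Finset.card_sdiff_add_card]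
      rw [Finset.sum_congr rfl hcongr, ← Finset.sum_mul]
      have hin := inner_bound a b (d - m) hab p hp0 hp1 g
        (fun s hs => by have := hrows.1 s hs; omega)
        (by
          have h2 := hrows.2
          have he : (fun s : ℤ×ℤ => s.2 = d - (m:ℤ) + 1) = (fun s : ℤ×ℤ => s.2 = d - (m:ℤ) + 1) := rfl
          exact h2)
      exact mul_le_mul_of_nonneg_right hin (pow_nonneg hp0.le _)
    refine le_trans (Finset.sum_le_sum hinner) ?_
    rw [← Finset.mul_sum, mul_comm]
    exact mul_le_mul_of_nonneg_right ih hM0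



lemma mk_eq (w : ℤ×ℤ) (j : ℤ) (h : w.2 = j) : ((w.1, j) : ℤ×ℤ) = w := by
  rw [← h]

lemma geom_to_cand (a b c d j : ℤ) (hab : a ≤ b)
    (u v : ℤ×ℤ) (huv : u ≠ v) (hu : u ∈ rectF a b c d) (hv : v ∈ rectF a b c d)
    (hsp : spanningPair a b j {u, v}) :
    ∃ F ∈ cand a b j, (F : Set (ℤ×ℤ)) ⊆ {u, v} := by
  have hu' : a ≤ u.1 ∧ u.1 ≤ b ∧ c ≤ u.2 ∧ u.2 ≤ d := by
    simp only [rectF, Finset.mem_product, Finset.mem_Icc] at hu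
    tauto
  have hv' : a ≤ v.1 ∧ v.1 ≤ b ∧ c ≤ v.2 ∧ v.2 ≤ d := by
    simp only [rectF, Finset.mem_product, Finset.mem_Icc] at hv
    tauto
  have hueta : ((u.1, u.2) : ℤ×ℤ) = u := rfl
  have hveta : ((v.1, v.2) : ℤ×ℤ) = v := rfl
  rcases geom a b j u v hsp with h | h | h | h
  · -- type I
    by_cases hlt : u.1 < v.1
    · refine ⟨{(u.1, j), (v.1, j)}, ?_, ?_⟩
      · refine Finset.mem_union.2 (Or.inl (Finset.mem_union.2 (Or.inl (Finset.mem_image.2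
          ⟨(u.1, v.1), ?_, rfl⟩))))
        simp only [I1, Finset.mem_filter, Finset.mem_product, Finset.mem_Icc]
        omega
      · intro s hs
        simp only [Finset.coe_insert, Finset.coe_singleton, Set.mem_insert_iff,
          Set.mem_singleton_iff] at hs
        rcases hs with rfl | rfl
        · exact Set.mem_insert_iff.2 (Or.inl (mk_eq u j h.1))
        · exact Set.mem_insert_iff.2 (Or.inr (Set.mem_singleton_iff.2 (mk_eq v j h.2.1)))
    · refine ⟨{(v.1, j), (u.1, j)}, ?_, ?_⟩
      · refine Finset.mem_union.2 (Or.inl (Finset.mem_union.2 (Or.inl (Finset.mem_image.2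
          ⟨(v.1, u.1), ?_, rfl⟩))))
        simp only [I1, Finset.mem_filter, Finset.mem_product, Finset.mem_Icc]
        omega
      · intro s hs
        simp only [Finset.coe_insert, Finset.coe_singleton, Set.mem_insert_iff,
          Set.mem_singleton_iff] at hs
        rcases hs with rfl | rfl
        · exact Set.mem_insert_iff.2 (Or.inr (Set.mem_singleton_iff.2 (mk_eq v j h.2.1)))
        · exact Set.mem_insert_iff.2 (Or.inl (mk_eq u j h.1))
  · -- type II
    refine ⟨{(u.1, j), (v.1, j+1)}, ?_, ?_⟩
    · refine Finset.mem_union.2 (Or.inl (Finset.mem_union.2 (Or.inr (Finset.mem_image.2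
        ⟨(u.1, v.1), ?_, rfl⟩))))
      simp only [I2, Finset.mem_filter, Finset.mem_product, Finset.mem_Icc]
      refine ⟨⟨⟨hu'.1, hu'.2.1⟩, hv'.1, hv'.2.1⟩, h.2.2.1, h.2.2.2.1, h.2.2.2.2⟩
    · intro s hs
      simp only [Finset.coe_insert, Finset.coe_singleton, Set.mem_insert_iff,
        Set.mem_singleton_iff] at hs
      rcases hs with rfl | rfl
      · exact Set.mem_insert_iff.2 (Or.inl (mk_eq u j h.1))
      · exact Set.mem_insert_iff.2 (Or.inr (Set.mem_singleton_iff.2 (mk_eq v (j+1) h.2.1)))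
  · -- type II symmetric
    refine ⟨{(v.1, j), (u.1, j+1)}, ?_, ?_⟩
    · refine Finset.mem_union.2 (Or.inl (Finset.mem_union.2 (Or.inr (Finset.mem_image.2
        ⟨(v.1, u.1), ?_, rfl⟩))))
      simp only [I2, Finset.mem_filter, Finset.mem_product, Finset.mem_Icc]
      refine ⟨⟨⟨hv'.1, hv'.2.1⟩, hu'.1, hu'.2.1⟩, ?_, ?_, ?_⟩ <;> omega
    · intro s hs
      simp only [Finset.coe_insert, Finset.coe_singleton, Set.mem_insert_iff,
        Set.mem_singleton_iff] at hs
      rcases hs with rfl | rfl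
      · exact Set.mem_insert_iff.2 (Or.inr (Set.mem_singleton_iff.2 (mk_eq v j h.1)))
      · exact Set.mem_insert_iff.2 (Or.inl (mk_eq u (j+1) h.2.1))
  · -- full row
    by_cases hab2 : a = b
    · refine ⟨{(a, j)}, ?_, ?_⟩
      · refine Finset.mem_union.2 (Or.inr ?_)
        rw [if_pos hab2]
        exact Finset.mem_singleton_self _
      · intro s hs
        simp only [Finset.coe_singleton, Set.mem_singleton_iff] at hs
        subst hs
        exact h a (le_refl a) hab
    · refine ⟨{(a, j), (a+1, j)}, ?_, ?_⟩
      · refine Finset.mem_union.2 (Or.inl (Finset.mem_union.2 (Or.inl (Finset.mem_image.2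
          ⟨(a, a+1), ?_, rfl⟩))))
        simp only [I1, Finset.mem_filter, Finset.mem_product, Finset.mem_Icc]
        omega
      · intro s hs
        simp only [Finset.coe_insert, Finset.coe_singleton, Set.mem_insert_iff,
          Set.mem_singleton_iff] at hs
        rcases hs with rfl | rfl
        · exact h a (le_refl a) hab
        · exact h (a+1) (by omega) (by omega)

theorem stmt9 (a b c d : ℤ) (hab : a ≤ b) (hcd : c ≤ d) (p : ℝ) (hp0 : 0 < p) (hp1 : p < 1) :
    prob (rectF a b c d) p (fun S => S ∩ (rectF a b c d : Set (ℤ × ℤ)) ∈ U0 a b c d)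
      ≤ (8*p^2*((b - a + 1 : ℤ):ℝ) + 8*p) ^ (d - c + 1) := by
  classical
  set n := (d - c + 1).toNat with hn
  have hnz : (n:ℤ) = d - c + 1 := Int.toNat_of_nonneg (by omega)
  have h1 : prob (rectF a b c d) p (fun S => S ∩ (rectF a b c d : Set (ℤ × ℤ)) ∈ U0 a b c d)
      ≤ prob (rectF a b c d) p (fun S => ∃ H ∈ Unions a b d n, (H:Set (ℤ×ℤ)) ⊆ S) := by
    apply prob_mono _ p hp0 hp1
    intro T hT hE
    obtain ⟨A, hA, hAT⟩ := hE
    have hAR : A ⊆ (rectF a b c d : Set (ℤ×ℤ)) := hA.1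
    apply Unions_cover a b d n ↑T
    intro j hj1 hj2
    have hjc : c ≤ j := by omega
    obtain ⟨u, v, hu, hv, huv, hsp⟩ := hA.2.2.2 j hjc hj2
    obtain ⟨F, hF, hFuv⟩ := geom_to_cand a b c d j hab u v huv
      (Finset.mem_coe.1 (hAR hu)) (Finset.mem_coe.1 (hAR hv)) hsp
    refine ⟨F, hF, hFuv.trans ?_⟩
    intro s hs
    rcases hs with rfl | hs
    · exact (hAT hu).1
    · rw [Set.mem_singleton_iff] at hs
      subst hs
      exact (hAT hv).1
  have h2 := prob_union_bound (rectF a b c d) p hp0 hp1 (Unions a b d n)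
  have h3 := Unions_weight a b d hab p hp0 hp1 n
  have hcast : ((Finset.Icc a b).card : ℝ) = ((b - a + 1 : ℤ):ℝ) := by
    rw [Int.card_Icc]
    have h4 : ((b + 1 - a).toNat : ℤ) = b + 1 - a := Int.toNat_of_nonneg (by omega)
    have h5 : (((b + 1 - a).toNat : ℤ) : ℝ) = ((b - a + 1 : ℤ):ℝ) := by
      rw [h4]; norm_num; ring
    exact_mod_cast h5
  rw [hcast] at h3
  have hfinal : prob (rectF a b c d) p (fun S => S ∩ (rectF a b c d : Set (ℤ × ℤ)) ∈ U0 a b c d)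
      ≤ (8*p^2*((b - a + 1 : ℤ):ℝ) + 8*p) ^ n := le_trans h1 (le_trans h2 h3)
  rw [show (d - c + 1 : ℤ) = (n:ℤ) from hnz.symm, zpow_natCast]
  exact hfinal
end

section
/- Let f, g : ℝ₊ → ℝ be positive, non-increasing, convex, differentiable functions, and let Δ_{f,g} = {(x,y) ∈ ℝ₊² : f′(x) ≠ 0, g′(y) ≠ 0, f′(x) = g′(y)}. Let a ≤ b be two points of Δ_{f,g} and suppose γ₀ := Δ_{f,g} ∩ ([a₁,b₁]×[a₂,b₂]) is a path from a to b. Then W_{f,g}(a,b) = w_{f,g}(γ₀), i.e. the infimum of the line integral over all paths from a to b is attained along the curve Δ_{f,g}. -/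
open Real

noncomputable def pathW (f g : ℝ → ℝ) (γ : ℝ → ℝ × ℝ) : ℝ :=
  ∫ t in (0:ℝ)..1,
    (f (γ t).1 * deriv (fun s => (γ s).2) t + g (γ t).2 * deriv (fun s => (γ s).1) t)

def IsPath (γ : ℝ → ℝ × ℝ) (A B : ℝ × ℝ) : Prop :=
  ContDiff ℝ 1 γ ∧ γ 0 = A ∧ γ 1 = B ∧
    MonotoneOn (fun t => (γ t).1) (Set.Icc 0 1) ∧
    MonotoneOn (fun t => (γ t).2) (Set.Icc 0 1) ∧
    ∀ t ∈ Set.Icc (0:ℝ) 1, 0 < (γ t).1 ∧ 0 < (γ t).2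

def pathImage (γ : ℝ → ℝ × ℝ) : Set (ℝ × ℝ) := γ '' Set.Icc 0 1

noncomputable def Wmin (f g : ℝ → ℝ) (A B : ℝ × ℝ) : ℝ :=
  sInf {w : ℝ | ∃ γ : ℝ → ℝ × ℝ, IsPath γ A B ∧ w = pathW f g γ}

def DeltaCurve (f g : ℝ → ℝ) : Set (ℝ × ℝ) :=
  {q | 0 < q.1 ∧ 0 < q.2 ∧ deriv f q.1 ≠ 0 ∧ deriv g q.2 ≠ 0 ∧ deriv f q.1 = deriv g q.2}

def NW (A B : Set (ℝ × ℝ)) : Prop :=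
  ∀ u ∈ A, ∀ v ∈ B, u.1 + u.2 = v.1 + v.2 → v.2 ≤ u.2

namespace S17

open MeasureTheory Set Filter

/-- last time (in `[0,1]`) at which the monotone coordinate `u` is still `≤ ξ`. -/
noncomputable def Tstop (u : ℝ → ℝ) (ξ : ℝ) : ℝ :=
  sSup {t | t ∈ Set.Icc (0:ℝ) 1 ∧ u t ≤ ξ}

/-- the "upper envelope": value of the other coordinate `v` at time `Tstop u ξ`. -/
noncomputable def Yf (u v : ℝ → ℝ) (ξ : ℝ) : ℝ := v (Tstop u ξ)

variable {u v : ℝ → ℝ} {ξ η t : ℝ}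

lemma Tstop_bddAbove (u : ℝ → ℝ) (ξ : ℝ) :
    BddAbove {t | t ∈ Set.Icc (0:ℝ) 1 ∧ u t ≤ ξ} :=
  ⟨1, fun t ht => ht.1.2⟩

lemma Tstop_mem (hu : Continuous u) (hξ : u 0 ≤ ξ) :
    Tstop u ξ ∈ Set.Icc (0:ℝ) 1 ∧ u (Tstop u ξ) ≤ ξ := by
  have hclosed : IsClosed {t | t ∈ Set.Icc (0:ℝ) 1 ∧ u t ≤ ξ} := by
    have : {t | t ∈ Set.Icc (0:ℝ) 1 ∧ u t ≤ ξ} = Set.Icc 0 1 ∩ u ⁻¹' Set.Iic ξ := rfl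
    rw [this]
    exact isClosed_Icc.inter (isClosed_Iic.preimage hu)
  have hne : {t | t ∈ Set.Icc (0:ℝ) 1 ∧ u t ≤ ξ}.Nonempty :=
    ⟨0, ⟨le_refl 0, zero_le_one⟩, hξ⟩
  exact hclosed.csSup_mem hne (Tstop_bddAbove u ξ)

lemma le_Tstop (ht : t ∈ Set.Icc (0:ℝ) 1) (h : u t ≤ ξ) : t ≤ Tstop u ξ :=
  le_csSup (Tstop_bddAbove u ξ) ⟨ht, h⟩

lemma u_le_of_le_Tstop (hu : Continuous u) (hum : MonotoneOn u (Set.Icc 0 1))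
    (hξ : u 0 ≤ ξ) (ht : t ∈ Set.Icc (0:ℝ) 1) (h : t ≤ Tstop u ξ) : u t ≤ ξ := by
  obtain ⟨hT, hTle⟩ := Tstop_mem hu hξ
  exact le_trans (hum ht hT h) hTle

lemma Tstop_eq_zero (hum : MonotoneOn u (Set.Icc 0 1)) (hξ : ξ < u 0) : Tstop u ξ = 0 := by
  have : {t | t ∈ Set.Icc (0:ℝ) 1 ∧ u t ≤ ξ} = ∅ := by
    ext t
    simp only [Set.mem_setOf_eq, Set.mem_empty_iff_false, iff_false, not_and]
    intro ht hle
    exact absurd (le_trans (hum ⟨le_refl 0, zero_le_one⟩ ht ht.1) hle) (not_le.mpr hξ)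
  rw [Tstop, this]
  exact Real.sSup_empty

lemma Yf_monotone (hu : Continuous u) (hum : MonotoneOn u (Set.Icc 0 1))
    (hvm : MonotoneOn v (Set.Icc 0 1)) : Monotone (Yf u v) := by
  intro ξ ξ' hle
  by_cases h : u 0 ≤ ξ
  · have h' : u 0 ≤ ξ' := le_trans h hle
    obtain ⟨hT, hTle⟩ := Tstop_mem hu h
    obtain ⟨hT', _⟩ := Tstop_mem hu h'
    exact hvm hT hT' (le_Tstop hT (le_trans hTle hle))
  · push_neg at h
    rw [Yf, Tstop_eq_zero hum h]
    by_cases h' : u 0 ≤ ξ'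
    · obtain ⟨hT', _⟩ := Tstop_mem hu h'
      exact hvm ⟨le_refl 0, zero_le_one⟩ hT' hT'.1
    · push_neg at h'
      rw [Yf, Tstop_eq_zero hum h']

lemma Yf_mem (hu : Continuous u) (hvm : MonotoneOn v (Set.Icc 0 1))
    (hξ : u 0 ≤ ξ) : Yf u v ξ ∈ Set.Icc (v 0) (v 1) := by
  obtain ⟨hT, _⟩ := Tstop_mem hu hξ
  exact ⟨hvm ⟨le_refl 0, zero_le_one⟩ hT hT.1, hvm hT ⟨zero_le_one, le_refl 1⟩ hT.2⟩

lemma lt_Yf_iff (hu : Continuous u) (hum : MonotoneOn u (Set.Icc 0 1))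
    (hvm : MonotoneOn v (Set.Icc 0 1)) (hξ : u 0 ≤ ξ) :
    η < Yf u v ξ ↔ ∃ s ∈ Set.Icc (0:ℝ) 1, u s ≤ ξ ∧ η < v s := by
  constructor
  · intro h
    obtain ⟨hT, hTle⟩ := Tstop_mem hu hξ
    exact ⟨Tstop u ξ, hT, hTle, h⟩
  · rintro ⟨s, hs, hsu, hsv⟩
    obtain ⟨hT, _⟩ := Tstop_mem hu hξ
    exact lt_of_lt_of_le hsv (hvm hs hT (le_Tstop hs hsu))

/-- the regions strictly below `Yf u v` and strictly to the left of `Yf v u` are disjoint. -/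
lemma Yf_disjoint (hu : Continuous u) (hv : Continuous v)
    (hum : MonotoneOn u (Set.Icc 0 1)) (hvm : MonotoneOn v (Set.Icc 0 1))
    (hξ : u 0 ≤ ξ) (hη : v 0 ≤ η)
    (h1 : η < Yf u v ξ) (h2 : ξ < Yf v u η) : False := by
  rw [lt_Yf_iff hu hum hvm hξ] at h1
  rw [lt_Yf_iff hv hvm hum hη] at h2
  obtain ⟨s, hs, hsu, hsv⟩ := h1
  obtain ⟨r, hr, hrv, hru⟩ := h2
  rcases le_total s r with hsr | hrs
  · exact absurd (le_trans (hvm hs hr hsr) hrv) (not_le.mpr hsv)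
  · exact absurd (le_trans (hum hr hs hrs) hsu) (not_le.mpr hru)

/-- covering: off the graph of `Yf u v`, the two regions cover the rectangle. -/
lemma Yf_cover (hu : Continuous u) (hv : Continuous v)
    (hum : MonotoneOn u (Set.Icc 0 1)) (hvm : MonotoneOn v (Set.Icc 0 1))
    (hξ : u 0 ≤ ξ) (hη : v 0 ≤ η) (hη' : η ≤ v 1)
    (h2 : ¬ ξ < Yf v u η) : η ≤ Yf u v ξ := by
  push_neg at h2
  set T := Tstop v η with hTdef
  obtain ⟨hT, hTle⟩ := Tstop_mem hv hη
  have hTY : v T ≤ Yf u v ξ := by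
    have h1 : T ≤ Tstop u ξ := le_Tstop hT h2
    obtain ⟨hT', _⟩ := Tstop_mem hu (le_trans (hum ⟨le_refl 0, zero_le_one⟩ hT hT.1) h2)
    exact hvm hT hT' h1
  have hηT : η ≤ v T := by
    rcases eq_or_lt_of_le hT.2 with hT1 | hT1
    · rw [hTdef, hT1]; exact hη'
    · have hstrict : ∀ s ∈ Set.Ioc T 1, η < v s := by
        intro s hs
        by_contra hle
        push_neg at hle
        exact absurd (le_Tstop ⟨le_trans hT.1 hs.1.le, hs.2⟩ hle) (not_le.mpr hs.1)
      have hne : (nhdsWithin T (Set.Ioc T 1)).NeBot := by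
        rw [← mem_closure_iff_nhdsWithin_neBot, closure_Ioc (ne_of_lt hT1)]
        exact ⟨le_refl T, hT1.le⟩
      have htd : Filter.Tendsto v (nhdsWithin T (Set.Ioc T 1)) (nhds (v T)) :=
        (hv.continuousAt).mono_left nhdsWithin_le_nhds
      exact ge_of_tendsto htd (eventually_nhdsWithin_of_forall fun s hs => (hstrict s hs).le)
  exact le_trans hηT hTY

end S17

namespace S17

open MeasureTheory Set Filter

/-- the product measure on the rectangle. -/
noncomputable def rmeas (A B : ℝ × ℝ) : Measure (ℝ × ℝ) :=
  (volume.restrict (Set.Icc A.1 B.1)).prod (volume.restrict (Set.Icc A.2 B.2))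

instance rmeas_finite (A B : ℝ × ℝ) : IsFiniteMeasure (rmeas A B) := by
  unfold rmeas; infer_instance

/-- the kernel associated to a path. -/
noncomputable def ker (f g : ℝ → ℝ) (γ : ℝ → ℝ × ℝ) (p : ℝ × ℝ) : ℝ :=
  (if p.2 < Yf (fun t => (γ t).1) (fun t => (γ t).2) p.1 then -(deriv f p.1) else 0)
  + (if p.1 < Yf (fun t => (γ t).2) (fun t => (γ t).1) p.2 then -(deriv g p.2) else 0)

noncomputable def mker (f g : ℝ → ℝ) (p : ℝ × ℝ) : ℝ :=
  min (-(deriv f p.1)) (-(deriv g p.2))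

/-- graphs of (monotone, hence measurable) functions are null for `rmeas`. -/
lemma graph_meas {Y : ℝ → ℝ} (hY : Measurable Y) :
    MeasurableSet {p : ℝ × ℝ | p.2 = Y p.1} := by
  have : {p : ℝ × ℝ | p.2 = Y p.1} = (fun p : ℝ × ℝ => p.2 - Y p.1) ⁻¹' {0} := by
    ext p; simp [sub_eq_zero]
  rw [this]
  exact (measurable_snd.sub (hY.comp measurable_fst)) (measurableSet_singleton 0)

lemma region_meas {Y : ℝ → ℝ} (hY : Measurable Y) :
    MeasurableSet {p : ℝ × ℝ | p.2 < Y p.1} := by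
  have : {p : ℝ × ℝ | p.2 < Y p.1} = (fun p : ℝ × ℝ => p.2 - Y p.1) ⁻¹' Set.Iio 0 := by
    ext p; simp [sub_neg]
  rw [this]
  exact (measurable_snd.sub (hY.comp measurable_fst)) measurableSet_Iio

lemma graph_null (A B : ℝ × ℝ) {Y : ℝ → ℝ} (hY : Monotone Y) :
    rmeas A B {p : ℝ × ℝ | p.2 = Y p.1} = 0 := by
  rw [rmeas, Measure.prod_apply (graph_meas hY.measurable)]
  have hz : ∀ ξ : ℝ,
      (volume.restrict (Set.Icc A.2 B.2)) (Prod.mk ξ ⁻¹' {p : ℝ × ℝ | p.2 = Y p.1}) = 0 := by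
    intro ξ
    have hss : Prod.mk ξ ⁻¹' {p : ℝ × ℝ | p.2 = Y p.1} = {Y ξ} := by
      ext η; simp [Set.mem_singleton_iff]
    rw [hss]
    refine le_antisymm (le_trans (Measure.restrict_apply_le _ _) ?_) zero_le
    simp
  simp [hz]

lemma ind_integrable (w Y : ℝ → ℝ) (c₁ c₂ d₁ d₂ : ℝ)
    (hw : Measurable w) (hY : Monotone Y) (M : ℝ)
    (hwb : ∀ ξ ∈ Set.Icc c₁ c₂, |w ξ| ≤ M) :
    Integrable (fun p : ℝ × ℝ => if p.2 < Y p.1 then w p.1 else 0)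
      ((volume.restrict (Set.Icc c₁ c₂)).prod (volume.restrict (Set.Icc d₁ d₂))) := by
  have hmeas : Measurable (fun p : ℝ × ℝ => if p.2 < Y p.1 then w p.1 else 0) :=
    Measurable.ite (region_meas hY.measurable) (hw.comp measurable_fst) measurable_const
  have hfin : IsFiniteMeasure
      ((volume.restrict (Set.Icc c₁ c₂)).prod (volume.restrict (Set.Icc d₁ d₂))) := by
    infer_instance
  refine Integrable.mono' (integrable_const M) hmeas.aestronglyMeasurable ?_
  rw [Measure.prod_restrict]
  refine (ae_restrict_mem (measurableSet_Icc.prod measurableSet_Icc)).mono ?_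
  rintro ⟨ξ, η⟩ ⟨hξ, hη⟩
  simp only [norm_eq_abs]
  by_cases h : η < Y ξ
  · simpa [h] using hwb ξ hξ
  · simp only [h, if_false, abs_zero]
    exact le_trans (abs_nonneg _) (hwb ξ hξ)

/-- generic 1d -> 2d conversion of the weighted-envelope integral. -/
lemma weight_repr (w Y : ℝ → ℝ) (c₁ c₂ d₁ d₂ : ℝ) (hd : d₁ ≤ d₂)
    (hw : Measurable w) (hY : Monotone Y) (M : ℝ)
    (hwb : ∀ ξ ∈ Set.Icc c₁ c₂, |w ξ| ≤ M)
    (hYr : ∀ ξ ∈ Set.Icc c₁ c₂, Y ξ ∈ Set.Icc d₁ d₂) :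
    ∫ ξ in Set.Icc c₁ c₂, w ξ * (Y ξ - d₁)
      = ∫ p, (if p.2 < Y p.1 then w p.1 else 0)
          ∂((volume.restrict (Set.Icc c₁ c₂)).prod (volume.restrict (Set.Icc d₁ d₂))) := by
  rw [MeasureTheory.integral_prod _ (ind_integrable w Y c₁ c₂ d₁ d₂ hw hY M hwb)]
  refine setIntegral_congr_fun measurableSet_Icc ?_
  intro ξ hξ
  have hinner : (fun η => if η < Y ξ then w ξ else 0)
      = (Set.Iio (Y ξ)).indicator (fun _ => w ξ) := by
    ext η
    by_cases h : η < Y ξ <;> simp [Set.indicator, h]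
  simp only
  rw [hinner, MeasureTheory.integral_indicator measurableSet_Iio,
    MeasureTheory.setIntegral_const, measureReal_def, Measure.restrict_apply measurableSet_Iio]
  have hset : Set.Iio (Y ξ) ∩ Set.Icc d₁ d₂ = Set.Ico d₁ (Y ξ) := by
    ext η
    constructor
    · rintro ⟨h1, h2, _⟩; exact ⟨h2, h1⟩
    · rintro ⟨h1, h2⟩; exact ⟨h2, h1, le_trans h2.le (hYr ξ hξ).2⟩
  rw [hset, Real.volume_Ico, ENNReal.toReal_ofReal (sub_nonneg.mpr (hYr ξ hξ).1)]
  rw [smul_eq_mul, mul_comm]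

/-- the coordinatewise representation of half of the path integral. -/
lemma coord_repr (h u v : ℝ → ℝ) (c₁ c₂ d₁ d₂ : ℝ) (hc₁ : 0 < c₁)
    (hu : ContDiff ℝ 1 u) (hv : ContDiff ℝ 1 v)
    (hum : MonotoneOn u (Set.Icc 0 1)) (hvm : MonotoneOn v (Set.Icc 0 1))
    (hu0 : u 0 = c₁) (hu1 : u 1 = c₂) (hv0 : v 0 = d₁) (hv1 : v 1 = d₂)
    (hhd : ∀ z ∈ Set.Ioi (0:ℝ), DifferentiableAt ℝ h z)
    (hhm : MonotoneOn (deriv h) (Set.Ioi 0)) :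
    ∫ t in (0:ℝ)..1, h (u t) * deriv v t
      = h c₂ * (d₂ - d₁) - ∫ ξ in Set.Icc c₁ c₂, deriv h ξ * (v (Tstop u ξ) - d₁) := by
  have hcont_u : Continuous u := hu.continuous
  have hdv : Continuous (deriv v) := hv.continuous_deriv le_rfl
  have hc : c₁ ≤ c₂ := by
    rw [← hu0, ← hu1]
    exact hum ⟨le_refl 0, zero_le_one⟩ ⟨zero_le_one, le_refl 1⟩ zero_le_one
  have hIoi : Set.Icc c₁ c₂ ⊆ Set.Ioi (0:ℝ) := fun z hz => lt_of_lt_of_le hc₁ hz.1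
  have humem : ∀ t ∈ Set.Icc (0:ℝ) 1, u t ∈ Set.Icc c₁ c₂ := fun t ht =>
    ⟨hu0 ▸ hum ⟨le_refl 0, zero_le_one⟩ ht ht.1, hu1 ▸ hum ht ⟨zero_le_one, le_refl 1⟩ ht.2⟩
  -- pointwise FTC in the ξ variable
  have step1 : ∀ t ∈ Set.Icc (0:ℝ) 1,
      h (u t) = h c₂ - ∫ ξ in Set.Icc c₁ c₂, (if u t ≤ ξ then deriv h ξ else 0) := by
    intro t ht
    have hmem := humem t ht
    have huIcc : Set.uIcc (u t) c₂ = Set.Icc (u t) c₂ := Set.uIcc_of_le hmem.2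
    have hder : ∀ ξ ∈ Set.uIcc (u t) c₂, HasDerivAt h (deriv h ξ) ξ := by
      intro ξ hξ
      rw [huIcc] at hξ
      exact (hhd ξ (hIoi ⟨le_trans hmem.1 hξ.1, hξ.2⟩)).hasDerivAt
    have hint : IntervalIntegrable (deriv h) volume (u t) c₂ := by
      apply MonotoneOn.intervalIntegrable (hhm.mono ?_)
      rw [huIcc]; exact fun z hz => hIoi ⟨le_trans hmem.1 hz.1, hz.2⟩
    have hFTC := intervalIntegral.integral_eq_sub_of_hasDerivAt hder hint
    have hconv : ∫ ξ in Set.Icc c₁ c₂, (if u t ≤ ξ then deriv h ξ else 0)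
        = ∫ ξ in (u t)..c₂, deriv h ξ := by
      have hindic : (fun ξ => if u t ≤ ξ then deriv h ξ else 0)
          = (Set.Ici (u t)).indicator (deriv h) := by
        ext ξ; by_cases hh : u t ≤ ξ <;> simp [Set.indicator, hh]
      rw [hindic, MeasureTheory.integral_indicator measurableSet_Ici,
        Measure.restrict_restrict measurableSet_Ici]
      have hseteq : Set.Ici (u t) ∩ Set.Icc c₁ c₂ = Set.Icc (u t) c₂ := by
        ext ξ
        constructor
        · rintro ⟨h1, _, h3⟩; exact ⟨h1, h3⟩
        · rintro ⟨h1, h2⟩; exact ⟨h1, le_trans hmem.1 h1, h2⟩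
      rw [hseteq, MeasureTheory.integral_Icc_eq_integral_Ioc,
        ← intervalIntegral.integral_of_le hmem.2]
    rw [hconv, hFTC]; ring
  -- bounds
  set M₁ := max |deriv h c₁| |deriv h c₂| with hM₁def
  have hM₁ : ∀ ξ ∈ Set.Icc c₁ c₂, |deriv h ξ| ≤ M₁ := by
    intro ξ hξ
    exact abs_le_max_abs_abs
      (hhm hc₁ (hIoi hξ) hξ.1) (hhm (hIoi hξ) (lt_of_lt_of_le hc₁ hc) hξ.2)
  have hM₁0 : 0 ≤ M₁ := le_trans (abs_nonneg _) (le_max_left _ _)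
  obtain ⟨M₂, hM₂⟩ := isCompact_Icc.exists_bound_of_continuousOn
    (s := Set.Icc (0:ℝ) 1) hdv.continuousOn
  -- integrability on the product
  have hSmeas : MeasurableSet {q : ℝ × ℝ | u q.1 ≤ q.2} := by
    have : {q : ℝ × ℝ | u q.1 ≤ q.2} = (fun q : ℝ × ℝ => u q.1 - q.2) ⁻¹' Set.Iic 0 := by
      ext q; simp [sub_nonpos]
    rw [this]
    exact ((hcont_u.comp continuous_fst).sub continuous_snd).measurable measurableSet_Iic
  have hFmeas : Measurable (fun q : ℝ × ℝ =>
      (if u q.1 ≤ q.2 then deriv h q.2 else 0) * deriv v q.1) :=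
    (Measurable.ite hSmeas ((measurable_deriv h).comp measurable_snd) measurable_const).mul
      (hdv.measurable.comp measurable_fst)
  have hFint : Integrable (fun q : ℝ × ℝ =>
      (if u q.1 ≤ q.2 then deriv h q.2 else 0) * deriv v q.1)
      ((volume.restrict (Set.Ioc (0:ℝ) 1)).prod (volume.restrict (Set.Icc c₁ c₂))) := by
    refine Integrable.mono' (integrable_const (M₁ * (|M₂| + 1)))
      hFmeas.aestronglyMeasurable ?_
    rw [Measure.prod_restrict]
    refine (ae_restrict_mem (measurableSet_Ioc.prod measurableSet_Icc)).mono ?_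
    rintro ⟨t, ξ⟩ ⟨ht, hξ⟩
    have h1 : |if u t ≤ ξ then deriv h ξ else 0| ≤ M₁ := by
      by_cases hcase : u t ≤ ξ
      · simpa [hcase] using hM₁ ξ hξ
      · simpa [hcase] using hM₁0
    have h2 : |deriv v t| ≤ |M₂| + 1 := by
      have := hM₂ t ⟨ht.1.le, ht.2⟩
      rw [norm_eq_abs] at this
      calc |deriv v t| ≤ M₂ := this
        _ ≤ |M₂| := le_abs_self _
        _ ≤ |M₂| + 1 := by linarith
    simp only [norm_eq_abs, abs_mul]
    exact mul_le_mul h1 h2 (abs_nonneg _) hM₁0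
  -- FTC for v on subintervals
  have hvFTC : ∀ s ∈ Set.Icc (0:ℝ) 1, ∫ t in Set.Ioc (0:ℝ) s, deriv v t = v s - d₁ := by
    intro s hs
    rw [← intervalIntegral.integral_of_le hs.1, intervalIntegral.integral_deriv_eq_sub
      (fun x _ => (hv.differentiable one_ne_zero).differentiableAt) (hdv.intervalIntegrable _ _),
      hv0]
  -- the inner time-integral
  have step4 : ∀ ξ ∈ Set.Icc c₁ c₂,
      ∫ t in Set.Ioc (0:ℝ) 1, (if u t ≤ ξ then deriv h ξ else 0) * deriv v t
        = deriv h ξ * (v (Tstop u ξ) - d₁) := by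
    intro ξ hξ
    have hξ0 : u 0 ≤ ξ := hu0 ▸ hξ.1
    obtain ⟨hTmem, hTle⟩ := Tstop_mem hcont_u hξ0
    have hS'meas : MeasurableSet {t : ℝ | u t ≤ ξ} :=
      (isClosed_Iic.preimage hcont_u).measurableSet
    have hrw : (fun t => (if u t ≤ ξ then deriv h ξ else 0) * deriv v t)
        = fun t => deriv h ξ * ({t : ℝ | u t ≤ ξ}.indicator (deriv v) t) := by
      ext t
      by_cases hcase : u t ≤ ξ <;> simp [Set.indicator, hcase]
    rw [hrw, MeasureTheory.integral_const_mul,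
      MeasureTheory.integral_indicator hS'meas,
      Measure.restrict_restrict hS'meas]
    have hseteq : {t : ℝ | u t ≤ ξ} ∩ Set.Ioc 0 1 = Set.Ioc 0 (Tstop u ξ) := by
      ext t
      constructor
      · rintro ⟨hle, h0, h1⟩
        exact ⟨h0, le_Tstop ⟨h0.le, h1⟩ hle⟩
      · rintro ⟨h0, hT⟩
        have ht1 : t ≤ 1 := le_trans hT hTmem.2
        exact ⟨u_le_of_le_Tstop hcont_u hum hξ0 ⟨h0.le, ht1⟩ hT, h0, ht1⟩
    rw [hseteq, hvFTC _ hTmem]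
  -- main computation
  rw [intervalIntegral.integral_of_le zero_le_one]
  have hcongr : ∫ t in Set.Ioc (0:ℝ) 1, h (u t) * deriv v t
      = ∫ t in Set.Ioc (0:ℝ) 1,
          (h c₂ * deriv v t
            - (∫ ξ in Set.Icc c₁ c₂, (if u t ≤ ξ then deriv h ξ else 0)) * deriv v t) := by
    refine setIntegral_congr_fun measurableSet_Ioc ?_
    intro t ht
    dsimp only
    rw [step1 t ⟨ht.1.le, ht.2⟩]
    ring
  rw [hcongr]
  have hhc : ContinuousOn h (Set.Icc c₁ c₂) := fun z hz =>
    ((hhd z (hIoi hz)).continuousAt).continuousWithinAt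
  have i1 : IntegrableOn (fun t => h c₂ * deriv v t) (Set.Ioc (0:ℝ) 1) volume :=
    ((continuous_const.mul hdv).continuousOn.integrableOn_compact isCompact_Icc).mono_set
      Set.Ioc_subset_Icc_self
  have i2 : IntegrableOn
      (fun t => (∫ ξ in Set.Icc c₁ c₂, (if u t ≤ ξ then deriv h ξ else 0)) * deriv v t)
      (Set.Ioc (0:ℝ) 1) volume := by
    have icont : IntegrableOn (fun t => (h c₂ - h (u t)) * deriv v t)
        (Set.Ioc (0:ℝ) 1) volume :=
      (((continuousOn_const.sub (hhc.comp hcont_u.continuousOn humem)).mul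
        hdv.continuousOn).integrableOn_compact isCompact_Icc).mono_set
        Set.Ioc_subset_Icc_self
    refine icont.congr_fun ?_ measurableSet_Ioc
    intro t ht
    dsimp only
    rw [step1 t ⟨ht.1.le, ht.2⟩]
    ring
  rw [MeasureTheory.integral_sub i1 i2]
  have hterm1 : ∫ t in Set.Ioc (0:ℝ) 1, h c₂ * deriv v t = h c₂ * (d₂ - d₁) := by
    rw [MeasureTheory.integral_const_mul, hvFTC 1 ⟨zero_le_one, le_refl 1⟩, hv1]
  have hterm2 :
      ∫ t in Set.Ioc (0:ℝ) 1,
        (∫ ξ in Set.Icc c₁ c₂, (if u t ≤ ξ then deriv h ξ else 0)) * deriv v t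
      = ∫ ξ in Set.Icc c₁ c₂, deriv h ξ * (v (Tstop u ξ) - d₁) := by
    have hpull : ∀ t : ℝ,
        (∫ ξ in Set.Icc c₁ c₂, (if u t ≤ ξ then deriv h ξ else 0)) * deriv v t
        = ∫ ξ in Set.Icc c₁ c₂, (if u t ≤ ξ then deriv h ξ else 0) * deriv v t := by
      intro t
      rw [← MeasureTheory.integral_mul_const]
    simp only [hpull]
    rw [MeasureTheory.integral_integral_swap hFint]
    exact setIntegral_congr_fun measurableSet_Icc step4
  rw [hterm1, hterm2]

lemma ind_integrable' (w Y : ℝ → ℝ) (c₁ c₂ d₁ d₂ : ℝ)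
    (hw : Measurable w) (hY : Monotone Y) (M : ℝ)
    (hwb : ∀ η ∈ Set.Icc d₁ d₂, |w η| ≤ M) :
    Integrable (fun p : ℝ × ℝ => if p.1 < Y p.2 then w p.2 else 0)
      ((volume.restrict (Set.Icc c₁ c₂)).prod (volume.restrict (Set.Icc d₁ d₂))) := by
  have hreg : MeasurableSet {p : ℝ × ℝ | p.1 < Y p.2} := by
    have : {p : ℝ × ℝ | p.1 < Y p.2} = (fun p : ℝ × ℝ => p.1 - Y p.2) ⁻¹' Set.Iio 0 := by
      ext p; simp [sub_neg]
    rw [this]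
    exact (measurable_fst.sub (hY.measurable.comp measurable_snd)) measurableSet_Iio
  have hmeas : Measurable (fun p : ℝ × ℝ => if p.1 < Y p.2 then w p.2 else 0) :=
    Measurable.ite hreg (hw.comp measurable_snd) measurable_const
  refine Integrable.mono' (integrable_const M) hmeas.aestronglyMeasurable ?_
  rw [Measure.prod_restrict]
  refine (ae_restrict_mem (measurableSet_Icc.prod measurableSet_Icc)).mono ?_
  rintro ⟨ξ, η⟩ ⟨hξ, hη⟩
  simp only [norm_eq_abs]
  by_cases hcase : ξ < Y η
  · simpa [hcase] using hwb η hη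
  · simp only [hcase, if_false, abs_zero]
    exact le_trans (abs_nonneg _) (hwb η hη)

lemma mker_integrable (f g : ℝ → ℝ) (A B : ℝ × ℝ)
    (hA1 : 0 < A.1) (hA2 : 0 < A.2) (hAB1 : A.1 ≤ B.1) (hAB2 : A.2 ≤ B.2)
    (hfm : MonotoneOn (deriv f) (Set.Ioi 0)) (hgm : MonotoneOn (deriv g) (Set.Ioi 0)) :
    Integrable (mker f g) (rmeas A B) := by
  have hmeas : Measurable (mker f g) :=
    (((measurable_deriv f).comp measurable_fst).neg).min
      (((measurable_deriv g).comp measurable_snd).neg)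
  set Mf := max |deriv f A.1| |deriv f B.1| with hMf
  set Mg := max |deriv g A.2| |deriv g B.2| with hMg
  refine Integrable.mono' (integrable_const (max Mf Mg)) hmeas.aestronglyMeasurable ?_
  rw [rmeas, Measure.prod_restrict]
  refine (ae_restrict_mem (measurableSet_Icc.prod measurableSet_Icc)).mono ?_
  rintro ⟨ξ, η⟩ ⟨hξ, hη⟩
  have h1 : |deriv f ξ| ≤ Mf :=
    abs_le_max_abs_abs (hfm hA1 (lt_of_lt_of_le hA1 hξ.1) hξ.1)
      (hfm (lt_of_lt_of_le hA1 hξ.1) (lt_of_lt_of_le hA1 hAB1) hξ.2)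
  have h2 : |deriv g η| ≤ Mg :=
    abs_le_max_abs_abs (hgm hA2 (lt_of_lt_of_le hA2 hη.1) hη.1)
      (hgm (lt_of_lt_of_le hA2 hη.1) (lt_of_lt_of_le hA2 hAB2) hη.2)
  simp only [norm_eq_abs, mker]
  refine le_trans abs_min_le_max_abs_abs ?_
  rw [abs_neg, abs_neg]
  exact max_le_max h1 h2

/-- the master representation of the path functional. -/
lemma pathW_repr (f g : ℝ → ℝ) (A B : ℝ × ℝ) (γ : ℝ → ℝ × ℝ)
    (hA1 : 0 < A.1) (hA2 : 0 < A.2)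
    (hfdiff : ∀ x ∈ Set.Ioi (0:ℝ), DifferentiableAt ℝ f x)
    (hgdiff : ∀ y ∈ Set.Ioi (0:ℝ), DifferentiableAt ℝ g y)
    (hfm : MonotoneOn (deriv f) (Set.Ioi 0))
    (hgm : MonotoneOn (deriv g) (Set.Ioi 0))
    (hγ : IsPath γ A B) :
    pathW f g γ = f B.1 * (B.2 - A.2) + g B.2 * (B.1 - A.1)
      + ∫ p, ker f g γ p ∂(rmeas A B) := by
  obtain ⟨hγC, hγ0, hγ1, hxm, hym, hpos⟩ := hγ
  have hx : ContDiff ℝ 1 (fun t => (γ t).1) := contDiff_fst.comp hγC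
  have hy : ContDiff ℝ 1 (fun t => (γ t).2) := contDiff_snd.comp hγC
  have hx0 : (fun t => (γ t).1) 0 = A.1 := by simp [hγ0]
  have hx1 : (fun t => (γ t).1) 1 = B.1 := by simp [hγ1]
  have hy0 : (fun t => (γ t).2) 0 = A.2 := by simp [hγ0]
  have hy1 : (fun t => (γ t).2) 1 = B.2 := by simp [hγ1]
  have hc1 : A.1 ≤ B.1 := by
    rw [← hx0, ← hx1]
    exact hxm ⟨le_refl 0, zero_le_one⟩ ⟨zero_le_one, le_refl 1⟩ zero_le_one
  have hd1 : A.2 ≤ B.2 := by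
    rw [← hy0, ← hy1]
    exact hym ⟨le_refl 0, zero_le_one⟩ ⟨zero_le_one, le_refl 1⟩ zero_le_one
  have hio1 : Set.Icc A.1 B.1 ⊆ Set.Ioi (0:ℝ) := fun z hz => lt_of_lt_of_le hA1 hz.1
  have hio2 : Set.Icc A.2 B.2 ⊆ Set.Ioi (0:ℝ) := fun z hz => lt_of_lt_of_le hA2 hz.1
  have hxmem : ∀ t ∈ Set.Icc (0:ℝ) 1, (γ t).1 ∈ Set.Icc A.1 B.1 := fun t ht =>
    ⟨hx0 ▸ hxm ⟨le_refl 0, zero_le_one⟩ ht ht.1, hx1 ▸ hxm ht ⟨zero_le_one, le_refl 1⟩ ht.2⟩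
  have hymem : ∀ t ∈ Set.Icc (0:ℝ) 1, (γ t).2 ∈ Set.Icc A.2 B.2 := fun t ht =>
    ⟨hy0 ▸ hym ⟨le_refl 0, zero_le_one⟩ ht ht.1, hy1 ▸ hym ht ⟨zero_le_one, le_refl 1⟩ ht.2⟩
  have hfc : ContinuousOn f (Set.Icc A.1 B.1) := fun z hz =>
    ((hfdiff z (hio1 hz)).continuousAt).continuousWithinAt
  have hgc : ContinuousOn g (Set.Icc A.2 B.2) := fun z hz =>
    ((hgdiff z (hio2 hz)).continuousAt).continuousWithinAt
  have i1 : IntervalIntegrable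
      (fun t => f (γ t).1 * deriv (fun s => (γ s).2) t) volume 0 1 := by
    apply ContinuousOn.intervalIntegrable
    rw [Set.uIcc_of_le (zero_le_one : (0:ℝ) ≤ 1)]
    exact (hfc.comp hx.continuous.continuousOn hxmem).mul
      (hy.continuous_deriv le_rfl).continuousOn
  have i2 : IntervalIntegrable
      (fun t => g (γ t).2 * deriv (fun s => (γ s).1) t) volume 0 1 := by
    apply ContinuousOn.intervalIntegrable
    rw [Set.uIcc_of_le (zero_le_one : (0:ℝ) ≤ 1)]
    exact (hgc.comp hy.continuous.continuousOn hymem).mul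
      (hx.continuous_deriv le_rfl).continuousOn
  have hsplit : pathW f g γ
      = (∫ t in (0:ℝ)..1, f (γ t).1 * deriv (fun s => (γ s).2) t)
        + ∫ t in (0:ℝ)..1, g (γ t).2 * deriv (fun s => (γ s).1) t := by
    rw [pathW, ← intervalIntegral.integral_add i1 i2]
  have hrf := coord_repr f (fun t => (γ t).1) (fun t => (γ t).2) A.1 B.1 A.2 B.2
    hA1 hx hy hxm hym hx0 hx1 hy0 hy1 hfdiff hfm
  have hrg := coord_repr g (fun t => (γ t).2) (fun t => (γ t).1) A.2 B.2 A.1 B.1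
    hA2 hy hx hym hxm hy0 hy1 hx0 hx1 hgdiff hgm
  -- bounds for the weights
  set Mf := max |deriv f A.1| |deriv f B.1| with hMfdef
  have hMf : ∀ ξ ∈ Set.Icc A.1 B.1, |(-(deriv f ξ))| ≤ Mf := by
    intro ξ hξ
    rw [abs_neg]
    exact abs_le_max_abs_abs (hfm hA1 (hio1 hξ) hξ.1)
      (hfm (hio1 hξ) (lt_of_lt_of_le hA1 hc1) hξ.2)
  set Mg := max |deriv g A.2| |deriv g B.2| with hMgdef
  have hMg : ∀ η ∈ Set.Icc A.2 B.2, |(-(deriv g η))| ≤ Mg := by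
    intro η hη
    rw [abs_neg]
    exact abs_le_max_abs_abs (hgm hA2 (hio2 hη) hη.1)
      (hgm (hio2 hη) (lt_of_lt_of_le hA2 hd1) hη.2)
  -- monotone envelopes
  have hYmono : Monotone (Yf (fun t => (γ t).1) (fun t => (γ t).2)) :=
    Yf_monotone hx.continuous hxm hym
  have hXmono : Monotone (Yf (fun t => (γ t).2) (fun t => (γ t).1)) :=
    Yf_monotone hy.continuous hym hxm
  have hYr : ∀ ξ ∈ Set.Icc A.1 B.1,
      Yf (fun t => (γ t).1) (fun t => (γ t).2) ξ ∈ Set.Icc A.2 B.2 := by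
    intro ξ hξ
    have := Yf_mem (v := fun t => (γ t).2) hx.continuous hym (hx0 ▸ hξ.1)
    rwa [hγ0, hγ1] at this
  have hXr : ∀ η ∈ Set.Icc A.2 B.2,
      Yf (fun t => (γ t).2) (fun t => (γ t).1) η ∈ Set.Icc A.1 B.1 := by
    intro η hη
    have := Yf_mem (v := fun t => (γ t).1) hy.continuous hxm (hy0 ▸ hη.1)
    rwa [hγ0, hγ1] at this
  -- convert the two 1d integrals to 2d integrals
  have e1 : ∫ ξ in Set.Icc A.1 B.1,
      deriv f ξ * ((fun t => (γ t).2) (Tstop (fun t => (γ t).1) ξ) - A.2)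
      = - ∫ p, (if p.2 < Yf (fun t => (γ t).1) (fun t => (γ t).2) p.1
          then -(deriv f p.1) else 0) ∂(rmeas A B) := by
    rw [rmeas, ← weight_repr (fun ξ => -(deriv f ξ))
      (Yf (fun t => (γ t).1) (fun t => (γ t).2)) A.1 B.1 A.2 B.2 hd1
      (measurable_deriv f).neg hYmono Mf hMf hYr, ← MeasureTheory.integral_neg]
    refine setIntegral_congr_fun measurableSet_Icc ?_
    intro ξ _
    simp only [Yf]
    ring
  have e2 : ∫ η in Set.Icc A.2 B.2,
      deriv g η * ((fun t => (γ t).1) (Tstop (fun t => (γ t).2) η) - A.1)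
      = - ∫ p, (if p.1 < Yf (fun t => (γ t).2) (fun t => (γ t).1) p.2
          then -(deriv g p.2) else 0) ∂(rmeas A B) := by
    have swp := MeasureTheory.integral_prod_swap
      (μ := volume.restrict (Set.Icc A.1 B.1)) (ν := volume.restrict (Set.Icc A.2 B.2))
      (fun p : ℝ × ℝ => if p.1 < Yf (fun t => (γ t).2) (fun t => (γ t).1) p.2
          then -(deriv g p.2) else 0)
    rw [rmeas, ← swp]
    have : ∫ z, (fun p : ℝ × ℝ => if p.1 < Yf (fun t => (γ t).2) (fun t => (γ t).1) p.2
          then -(deriv g p.2) else 0) z.swap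
        ∂((volume.restrict (Set.Icc A.2 B.2)).prod (volume.restrict (Set.Icc A.1 B.1)))
        = ∫ q, (if q.2 < Yf (fun t => (γ t).2) (fun t => (γ t).1) q.1
          then -(deriv g q.1) else 0)
        ∂((volume.restrict (Set.Icc A.2 B.2)).prod (volume.restrict (Set.Icc A.1 B.1))) := by
      rfl
    rw [this, ← weight_repr (fun η => -(deriv g η))
      (Yf (fun t => (γ t).2) (fun t => (γ t).1)) A.2 B.2 A.1 B.1 hc1
      (measurable_deriv g).neg hXmono Mg hMg hXr, ← MeasureTheory.integral_neg]
    refine setIntegral_congr_fun measurableSet_Icc ?_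
    intro η _
    simp only [Yf]
    ring
  -- integrability of the two kernel halves
  have int1 : Integrable (fun p : ℝ × ℝ =>
      if p.2 < Yf (fun t => (γ t).1) (fun t => (γ t).2) p.1 then -(deriv f p.1) else 0)
      (rmeas A B) := by
    rw [rmeas]
    exact ind_integrable _ _ A.1 B.1 A.2 B.2 (measurable_deriv f).neg hYmono Mf hMf
  have int2 : Integrable (fun p : ℝ × ℝ =>
      if p.1 < Yf (fun t => (γ t).2) (fun t => (γ t).1) p.2 then -(deriv g p.2) else 0)
      (rmeas A B) := by
    rw [rmeas]
    exact ind_integrable' _ _ A.1 B.1 A.2 B.2 (measurable_deriv g).neg hXmono Mg hMg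
  have hker : ∫ p, ker f g γ p ∂(rmeas A B)
      = (∫ p, (if p.2 < Yf (fun t => (γ t).1) (fun t => (γ t).2) p.1
          then -(deriv f p.1) else 0) ∂(rmeas A B))
        + ∫ p, (if p.1 < Yf (fun t => (γ t).2) (fun t => (γ t).1) p.2
          then -(deriv g p.2) else 0) ∂(rmeas A B) := by
    rw [← MeasureTheory.integral_add int1 int2]
    rfl
  rw [hsplit, hrf, hrg, e1, e2, hker]
  ring

lemma ker_integrable (f g : ℝ → ℝ) (A B : ℝ × ℝ) (γ : ℝ → ℝ × ℝ)
    (hA1 : 0 < A.1) (hA2 : 0 < A.2)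
    (hfm : MonotoneOn (deriv f) (Set.Ioi 0)) (hgm : MonotoneOn (deriv g) (Set.Ioi 0))
    (hγ : IsPath γ A B) :
    Integrable (ker f g γ) (rmeas A B) := by
  obtain ⟨hγC, hγ0, hγ1, hxm, hym, hpos⟩ := hγ
  have hx : ContDiff ℝ 1 (fun t => (γ t).1) := contDiff_fst.comp hγC
  have hy : ContDiff ℝ 1 (fun t => (γ t).2) := contDiff_snd.comp hγC
  have hx0 : (fun t => (γ t).1) 0 = A.1 := by simp [hγ0]
  have hx1 : (fun t => (γ t).1) 1 = B.1 := by simp [hγ1]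
  have hy0 : (fun t => (γ t).2) 0 = A.2 := by simp [hγ0]
  have hy1 : (fun t => (γ t).2) 1 = B.2 := by simp [hγ1]
  have hc1 : A.1 ≤ B.1 := by
    rw [← hx0, ← hx1]
    exact hxm ⟨le_refl 0, zero_le_one⟩ ⟨zero_le_one, le_refl 1⟩ zero_le_one
  have hd1 : A.2 ≤ B.2 := by
    rw [← hy0, ← hy1]
    exact hym ⟨le_refl 0, zero_le_one⟩ ⟨zero_le_one, le_refl 1⟩ zero_le_one
  have hio1 : Set.Icc A.1 B.1 ⊆ Set.Ioi (0:ℝ) := fun z hz => lt_of_lt_of_le hA1 hz.1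
  have hio2 : Set.Icc A.2 B.2 ⊆ Set.Ioi (0:ℝ) := fun z hz => lt_of_lt_of_le hA2 hz.1
  have hYmono : Monotone (Yf (fun t => (γ t).1) (fun t => (γ t).2)) :=
    Yf_monotone hx.continuous hxm hym
  have hXmono : Monotone (Yf (fun t => (γ t).2) (fun t => (γ t).1)) :=
    Yf_monotone hy.continuous hym hxm
  have hMf : ∀ ξ ∈ Set.Icc A.1 B.1, |(-(deriv f ξ))| ≤ max |deriv f A.1| |deriv f B.1| := by
    intro ξ hξ
    rw [abs_neg]
    exact abs_le_max_abs_abs (hfm hA1 (hio1 hξ) hξ.1)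
      (hfm (hio1 hξ) (lt_of_lt_of_le hA1 hc1) hξ.2)
  have hMg : ∀ η ∈ Set.Icc A.2 B.2, |(-(deriv g η))| ≤ max |deriv g A.2| |deriv g B.2| := by
    intro η hη
    rw [abs_neg]
    exact abs_le_max_abs_abs (hgm hA2 (hio2 hη) hη.1)
      (hgm (hio2 hη) (lt_of_lt_of_le hA2 hd1) hη.2)
  have int1 := ind_integrable (fun ξ => -(deriv f ξ))
    (Yf (fun t => (γ t).1) (fun t => (γ t).2)) A.1 B.1 A.2 B.2
    (measurable_deriv f).neg hYmono _ hMf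
  have int2 := ind_integrable' (fun η => -(deriv g η))
    (Yf (fun t => (γ t).2) (fun t => (γ t).1)) A.1 B.1 A.2 B.2
    (measurable_deriv g).neg hXmono _ hMg
  rw [rmeas]
  exact int1.add int2

lemma mker_le_ker (f g : ℝ → ℝ) (A B : ℝ × ℝ) (γ : ℝ → ℝ × ℝ)
    (hA1 : 0 < A.1) (hA2 : 0 < A.2)
    (hfneg : ∀ z ∈ Set.Ioi (0:ℝ), deriv f z ≤ 0)
    (hgneg : ∀ z ∈ Set.Ioi (0:ℝ), deriv g z ≤ 0)
    (hγ : IsPath γ A B) :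
    ∀ᵐ p ∂(rmeas A B), mker f g p ≤ ker f g γ p := by
  obtain ⟨hγC, hγ0, hγ1, hxm, hym, hpos⟩ := hγ
  have hx : ContDiff ℝ 1 (fun t => (γ t).1) := contDiff_fst.comp hγC
  have hy : ContDiff ℝ 1 (fun t => (γ t).2) := contDiff_snd.comp hγC
  have hx0 : (fun t => (γ t).1) 0 = A.1 := by simp [hγ0]
  have hy0 : (fun t => (γ t).2) 0 = A.2 := by simp [hγ0]
  have hy1 : (fun t => (γ t).2) 1 = B.2 := by simp [hγ1]
  have hx0' : (γ 0).1 = A.1 := hx0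
  have hy0' : (γ 0).2 = A.2 := hy0
  have hy1' : (γ 1).2 = B.2 := hy1
  have hYmono : Monotone (Yf (fun t => (γ t).1) (fun t => (γ t).2)) :=
    Yf_monotone hx.continuous hxm hym
  have hgraph : rmeas A B {p : ℝ × ℝ | p.2
      = Yf (fun t => (γ t).1) (fun t => (γ t).2) p.1} = 0 :=
    graph_null A B hYmono
  have hrect : ∀ᵐ p ∂(rmeas A B), p ∈ (Set.Icc A.1 B.1) ×ˢ (Set.Icc A.2 B.2) := by
    rw [rmeas, Measure.prod_restrict]
    exact ae_restrict_mem (measurableSet_Icc.prod measurableSet_Icc)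
  have hng : ∀ᵐ p ∂(rmeas A B),
      p ∉ {p : ℝ × ℝ | p.2 = Yf (fun t => (γ t).1) (fun t => (γ t).2) p.1} :=
    measure_eq_zero_iff_ae_notMem.mp hgraph
  filter_upwards [hrect, hng] with p hp hnp
  obtain ⟨hp1, hp2⟩ := hp
  have hξpos : (0:ℝ) < p.1 := lt_of_lt_of_le hA1 hp1.1
  have hηpos : (0:ℝ) < p.2 := lt_of_lt_of_le hA2 hp2.1
  by_cases h1 : p.2 < Yf (fun t => (γ t).1) (fun t => (γ t).2) p.1
  · have hsecond : (0:ℝ) ≤ (if p.1 < Yf (fun t => (γ t).2) (fun t => (γ t).1) p.2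
        then -(deriv g p.2) else 0) := by
      by_cases h2 : p.1 < Yf (fun t => (γ t).2) (fun t => (γ t).1) p.2
      · simp only [h2, if_true]
        linarith [hgneg p.2 hηpos]
      · simp [h2]
    have : mker f g p ≤ -(deriv f p.1) := min_le_left _ _
    simp only [ker, h1, if_true]
    linarith
  · by_cases h2 : p.1 < Yf (fun t => (γ t).2) (fun t => (γ t).1) p.2
    · have : mker f g p ≤ -(deriv g p.2) := min_le_right _ _
      simp only [ker, h1, if_false, h2, if_true]
      linarith
    · exfalso
      have hcov := Yf_cover hx.continuous hy.continuous hxm hym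
        (hx0' ▸ hp1.1) (hy0' ▸ hp2.1) (hy1' ▸ hp2.2) h2
      exact hnp (le_antisymm hcov (not_lt.mp h1))

lemma ker_le_mker (f g : ℝ → ℝ) (A B : ℝ × ℝ) (γ₀ : ℝ → ℝ × ℝ)
    (hA1 : 0 < A.1) (hA2 : 0 < A.2)
    (hfm : MonotoneOn (deriv f) (Set.Ioi 0)) (hgm : MonotoneOn (deriv g) (Set.Ioi 0))
    (hfneg : ∀ z ∈ Set.Ioi (0:ℝ), deriv f z ≤ 0)
    (hgneg : ∀ z ∈ Set.Ioi (0:ℝ), deriv g z ≤ 0)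
    (hγ : IsPath γ₀ A B)
    (him : pathImage γ₀ = DeltaCurve f g ∩ Set.Icc A.1 B.1 ×ˢ Set.Icc A.2 B.2) :
    ∀ᵐ p ∂(rmeas A B), ker f g γ₀ p ≤ mker f g p := by
  obtain ⟨hγC, hγ0, hγ1, hxm, hym, hpos⟩ := hγ
  have hx : ContDiff ℝ 1 (fun t => (γ₀ t).1) := contDiff_fst.comp hγC
  have hy : ContDiff ℝ 1 (fun t => (γ₀ t).2) := contDiff_snd.comp hγC
  have hx0 : (fun t => (γ₀ t).1) 0 = A.1 := by simp [hγ0]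
  have hy0 : (fun t => (γ₀ t).2) 0 = A.2 := by simp [hγ0]
  have hx0' : (γ₀ 0).1 = A.1 := hx0
  have hy0' : (γ₀ 0).2 = A.2 := hy0
  have hdelta : ∀ s ∈ Set.Icc (0:ℝ) 1, γ₀ s ∈ DeltaCurve f g := by
    intro s hs
    have : γ₀ s ∈ pathImage γ₀ := ⟨s, hs, rfl⟩
    rw [him] at this
    exact this.1
  have hrect : ∀ᵐ p ∂(rmeas A B), p ∈ (Set.Icc A.1 B.1) ×ˢ (Set.Icc A.2 B.2) := by
    rw [rmeas, Measure.prod_restrict]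
    exact ae_restrict_mem (measurableSet_Icc.prod measurableSet_Icc)
  filter_upwards [hrect] with p hp
  obtain ⟨hp1, hp2⟩ := hp
  have hξpos : (0:ℝ) < p.1 := lt_of_lt_of_le hA1 hp1.1
  have hηpos : (0:ℝ) < p.2 := lt_of_lt_of_le hA2 hp2.1
  by_cases h1 : p.2 < Yf (fun t => (γ₀ t).1) (fun t => (γ₀ t).2) p.1
  · have h2 : ¬ p.1 < Yf (fun t => (γ₀ t).2) (fun t => (γ₀ t).1) p.2 := fun h2 =>
      Yf_disjoint hx.continuous hy.continuous hxm hym (hx0' ▸ hp1.1) (hy0' ▸ hp2.1) h1 h2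
    obtain ⟨s, hs, hsu, hsv⟩ :=
      (lt_Yf_iff hx.continuous hxm hym (hx0' ▸ hp1.1)).mp h1
    obtain ⟨hq1, hq2, _, _, hqe⟩ := hdelta s hs
    have hcomp : deriv g p.2 ≤ deriv f p.1 := by
      calc deriv g p.2 ≤ deriv g (γ₀ s).2 := hgm hηpos hq2 hsv.le
        _ = deriv f (γ₀ s).1 := hqe.symm
        _ ≤ deriv f p.1 := hfm hq1 hξpos hsu
    simp only [ker, h1, if_true, h2, if_false, add_zero, mker]
    exact le_min (le_refl _) (by linarith)
  · by_cases h2 : p.1 < Yf (fun t => (γ₀ t).2) (fun t => (γ₀ t).1) p.2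
    · obtain ⟨s, hs, hsv, hsu⟩ :=
        (lt_Yf_iff hy.continuous hym hxm (hy0' ▸ hp2.1)).mp h2
      obtain ⟨hq1, hq2, _, _, hqe⟩ := hdelta s hs
      have hcomp : deriv f p.1 ≤ deriv g p.2 := by
        calc deriv f p.1 ≤ deriv f (γ₀ s).1 := hfm hξpos hq1 hsu.le
          _ = deriv g (γ₀ s).2 := hqe
          _ ≤ deriv g p.2 := hgm hq2 hηpos hsv
      simp only [ker, h1, if_false, h2, if_true, zero_add, mker]
      exact le_min (by linarith) (le_refl _)
    · simp only [ker, h1, if_false, h2, add_zero, mker]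
      exact le_min (by linarith [hfneg p.1 hξpos]) (by linarith [hgneg p.2 hηpos])

end S17

theorem stmt17 (f g : ℝ → ℝ)
    (hfpos : ∀ x ∈ Set.Ioi (0:ℝ), 0 < f x) (hgpos : ∀ y ∈ Set.Ioi (0:ℝ), 0 < g y)
    (hfmono : AntitoneOn f (Set.Ioi 0)) (hgmono : AntitoneOn g (Set.Ioi 0))
    (hfconv : ConvexOn ℝ (Set.Ioi 0) f) (hgconv : ConvexOn ℝ (Set.Ioi 0) g)
    (hfdiff : ∀ x ∈ Set.Ioi (0:ℝ), DifferentiableAt ℝ f x)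
    (hgdiff : ∀ y ∈ Set.Ioi (0:ℝ), DifferentiableAt ℝ g y)
    (A B : ℝ × ℝ) (hA : A ∈ DeltaCurve f g) (hB : B ∈ DeltaCurve f g)
    (hAB1 : A.1 ≤ B.1) (hAB2 : A.2 ≤ B.2)
    (γ₀ : ℝ → ℝ × ℝ) (h₀ : IsPath γ₀ A B)
    (him : pathImage γ₀ = DeltaCurve f g ∩ Set.Icc A.1 B.1 ×ˢ Set.Icc A.2 B.2) :
    Wmin f g A B = pathW f g γ₀ := by
  obtain ⟨hA1, hA2, _, _, _⟩ := hA
  have hfm : MonotoneOn (deriv f) (Set.Ioi 0) := hfconv.monotoneOn_deriv hfdiff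
  have hgm : MonotoneOn (deriv g) (Set.Ioi 0) := hgconv.monotoneOn_deriv hgdiff
  have hfneg : ∀ z ∈ Set.Ioi (0:ℝ), deriv f z ≤ 0 := by
    intro z hz
    have hz' : (0:ℝ) < z := hz
    have hz1 : z + 1 ∈ Set.Ioi (0:ℝ) := by
      simp only [Set.mem_Ioi]; linarith
    have hslope := hfconv.deriv_le_slope hz hz1 (lt_add_one z) (hfdiff z hz)
    have hle : f (z+1) ≤ f z := hfmono hz hz1 (by linarith)
    rw [slope_def_field] at hslope
    have h1 : z + 1 - z = 1 := by ring
    rw [h1, div_one] at hslope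
    linarith
  have hgneg : ∀ z ∈ Set.Ioi (0:ℝ), deriv g z ≤ 0 := by
    intro z hz
    have hz' : (0:ℝ) < z := hz
    have hz1 : z + 1 ∈ Set.Ioi (0:ℝ) := by
      simp only [Set.mem_Ioi]; linarith
    have hslope := hgconv.deriv_le_slope hz hz1 (lt_add_one z) (hgdiff z hz)
    have hle : g (z+1) ≤ g z := hgmono hz hz1 (by linarith)
    rw [slope_def_field] at hslope
    have h1 : z + 1 - z = 1 := by ring
    rw [h1, div_one] at hslope
    linarith
  have key : ∀ γ : ℝ → ℝ × ℝ, IsPath γ A B → pathW f g γ₀ ≤ pathW f g γ := by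
    intro γ hγ
    rw [S17.pathW_repr f g A B γ₀ hA1 hA2 hfdiff hgdiff hfm hgm h₀,
        S17.pathW_repr f g A B γ hA1 hA2 hfdiff hgdiff hfm hgm hγ]
    have m_int := S17.mker_integrable f g A B hA1 hA2 hAB1 hAB2 hfm hgm
    have k0_int := S17.ker_integrable f g A B γ₀ hA1 hA2 hfm hgm h₀
    have kγ_int := S17.ker_integrable f g A B γ hA1 hA2 hfm hgm hγ
    have le1 : ∫ p, S17.ker f g γ₀ p ∂(S17.rmeas A B)
        ≤ ∫ p, S17.mker f g p ∂(S17.rmeas A B) :=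
      MeasureTheory.integral_mono_ae k0_int m_int
        (S17.ker_le_mker f g A B γ₀ hA1 hA2 hfm hgm hfneg hgneg h₀ him)
    have le2 : ∫ p, S17.mker f g p ∂(S17.rmeas A B)
        ≤ ∫ p, S17.ker f g γ p ∂(S17.rmeas A B) :=
      MeasureTheory.integral_mono_ae m_int kγ_int
        (S17.mker_le_ker f g A B γ hA1 hA2 hfneg hgneg hγ)
    linarith
  have hmem : pathW f g γ₀ ∈ {w : ℝ | ∃ γ : ℝ → ℝ × ℝ, IsPath γ A B ∧ w = pathW f g γ} :=
    ⟨γ₀, h₀, rfl⟩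
  have hlb : ∀ w ∈ {w : ℝ | ∃ γ : ℝ → ℝ × ℝ, IsPath γ A B ∧ w = pathW f g γ},
      pathW f g γ₀ ≤ w := by
    rintro w ⟨γ, hγ, rfl⟩
    exact key γ hγ
  rw [Wmin]
  exact le_antisymm (csInf_le ⟨pathW f g γ₀, hlb⟩ hmem) (le_csInf ⟨pathW f g γ₀, hmem⟩ hlb)
end
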